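/- arXiv:1905.06779 — 6 statements merged into one kernel-verified Lean document; each statement's English description precedes it below -/
import Mathlib

section
/- Let α ∈ ℂ with 0 < Re α < 1, ω ∈ [0, π/2), z ∈ S_{π/2−ω} and δ ∈ (0, π/2 − ω − |arg z|). Then, as λ → 0 in S_{ω+δ}, one has the expansion u_z(λ) = 1 − (Γ(1−α)/(2^{2α} Γ(1+α))) (λz)^{2α} + O((λz)^2); in particular u_z(λ) − 1 = O(λ^{2α}), i.e. u_z has polynomial limit 1 at the origin. -/
open Complex Filter Set MeasureTheory

/-- The open sector `S_θ = {ζ ∈ ℂ \ (-∞,0] : |arg ζ| < θ}` for `θ ∈ (0,π)`,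
with the convention `S_0 = (0,∞)`. -/
noncomputable def sector (θ : ℝ) : Set ℂ :=
  if θ = 0 then {ζ : ℂ | 0 < ζ.re ∧ ζ.im = 0}
  else {ζ : ℂ | ζ ≠ 0 ∧ |ζ.arg| < θ}

/-- Modified Bessel function of the first kind, `I_β`. -/
noncomputable def besselI (β ζ : ℂ) : ℂ :=
  (ζ / 2) ^ β * ∑' k : ℕ, ζ ^ (2 * k) / ((4 : ℂ) ^ k * (k.factorial : ℂ) * Complex.Gamma (β + (k : ℂ) + 1))

/-- Modified Bessel function of the second kind, `K_β` (for `Re β ∉ ℤ`). -/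
noncomputable def besselK (β ζ : ℂ) : ℂ :=
  ((Real.pi : ℂ) / (2 * Complex.sin (β * (Real.pi : ℂ)))) * (besselI (-β) ζ - besselI β ζ)

/-- The function `u_z(λ) = (λz)^α K_α(λz) / (2^(α-1) Γ(α))`. -/
noncomputable def uFun (α z l : ℂ) : ℂ :=
  (l * z) ^ α * besselK α (l * z) / ((2 : ℂ) ^ (α - 1) * Complex.Gamma α)

/-- The function `v_z(λ) = (Γ(1-α)/2^α) (λz)^α I_{-α}(λz)`. -/
noncomputable def vFun (α z l : ℂ) : ℂ :=
  (Complex.Gamma (1 - α) / (2 : ℂ) ^ α) * ((l * z) ^ α * besselI (-α) (l * z))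

/-- The function `w_z(λ) = (Γ(α)/2^(1-α)) (λ⁻¹ z)^α I_α(λz)`. -/
noncomputable def wFun (α z l : ℂ) : ℂ :=
  (Complex.Gamma α / (2 : ℂ) ^ (1 - α)) * ((l⁻¹ * z) ^ α * besselI α (l * z))


section Helpers

/-- Uniform bound on the norms of reciprocals of `Γ(β + k)`, `k ∈ ℕ`. -/
lemma gammaInv_bound (β : ℂ) :
    ∃ M : ℝ, 0 ≤ M ∧ ∀ k : ℕ, ‖(Complex.Gamma (β + k))⁻¹‖ ≤ M := by
  set a : ℕ → ℝ := fun k => ‖(Complex.Gamma (β + k))⁻¹‖ with ha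
  set n₀ : ℕ := ⌈‖β‖⌉₊ + 1 with hn₀
  have hstep : ∀ k, n₀ ≤ k → a (k + 1) ≤ a k := by
    intro k hk
    have hk1 : (1 : ℝ) ≤ ‖β + (k : ℂ)‖ := by
      have h1 : ‖β‖ ≤ (⌈‖β‖⌉₊ : ℝ) := Nat.le_ceil _
      have h2 : ((n₀ : ℕ) : ℝ) ≤ (k : ℝ) := by exact_mod_cast hk
      have h3 : ‖((k : ℕ) : ℂ)‖ ≤ ‖β + k‖ + ‖β‖ := by
        calc ‖((k : ℕ) : ℂ)‖ = ‖(β + k) + (-β)‖ := by ring_nf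
          _ ≤ ‖β + (k:ℂ)‖ + ‖(-β : ℂ)‖ := norm_add_le _ _
          _ = ‖β + (k:ℂ)‖ + ‖β‖ := by rw [norm_neg]
      have h4 : ‖((k : ℕ) : ℂ)‖ = (k : ℝ) := by simp
      push_cast at h2
      nlinarith [show ((n₀ : ℕ) : ℝ) = (⌈‖β‖⌉₊ : ℝ) + 1 by simp [hn₀]]
    have hne : β + (k : ℂ) ≠ 0 := by
      intro h
      rw [h] at hk1
      simp at hk1
      linarith
    have hrec : Complex.Gamma (β + ((k + 1 : ℕ) : ℂ)) = (β + k) * Complex.Gamma (β + k) := by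
      have h := Complex.Gamma_add_one (β + k) hne
      rw [← h]
      push_cast
      ring_nf
    simp only [ha]
    rw [hrec, mul_inv, norm_mul, norm_inv]
    have h0 : (0:ℝ) ≤ ‖(Complex.Gamma (β + (k:ℂ)))⁻¹‖ := norm_nonneg _
    calc ‖(β + (k:ℂ))‖⁻¹ * ‖(Complex.Gamma (β + (k:ℂ)))⁻¹‖
        ≤ 1 * ‖(Complex.Gamma (β + (k:ℂ)))⁻¹‖ := by
          apply mul_le_mul_of_nonneg_right _ h0
          exact inv_le_one_of_one_le₀ hk1
      _ = ‖(Complex.Gamma (β + (k:ℂ)))⁻¹‖ := one_mul _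
  have hmono : ∀ m, a (n₀ + m) ≤ a n₀ := by
    intro m
    induction m with
    | zero => simp
    | succ m ih =>
      have := hstep (n₀ + m) (Nat.le_add_right _ _)
      calc a (n₀ + (m+1)) = a ((n₀ + m) + 1) := by ring_nf
        _ ≤ a (n₀ + m) := this
        _ ≤ a n₀ := ih
  refine ⟨∑ k ∈ Finset.range (n₀ + 1), a k, ?_, ?_⟩
  · exact Finset.sum_nonneg fun k _ => norm_nonneg _
  · intro k
    rcases le_or_gt k n₀ with h | h
    · exact Finset.single_le_sum (f := a) (fun i _ => norm_nonneg _)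
        (Finset.mem_range.mpr (Nat.lt_succ_of_le h))
    · have : a k ≤ a n₀ := by
        have hk : k = n₀ + (k - n₀) := by omega
        rw [hk]; exact hmono _
      refine this.trans ?_
      exact Finset.single_le_sum (f := a) (fun i _ => norm_nonneg _)
        (Finset.mem_range.mpr (Nat.lt_succ_of_le le_rfl))

/-- The tail series in the expansion of the Bessel series. -/
noncomputable def Gser (β ζ : ℂ) : ℂ :=
  ∑' k : ℕ, ζ ^ (2 * k) /
    ((4 : ℂ) ^ (k + 1) * ((k + 1).factorial : ℂ) * Complex.Gamma (β + k + 2))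

lemma besselI_term_norm_le (β ζ : ℂ) {M : ℝ}
    (hM : ∀ k : ℕ, ‖(Complex.Gamma (β + 1 + k))⁻¹‖ ≤ M) (k : ℕ) :
    ‖ζ ^ (2 * k) / ((4 : ℂ) ^ k * (k.factorial : ℂ) * Complex.Gamma (β + k + 1))‖
      ≤ M * ((‖ζ‖ ^ 2) ^ k / k.factorial) := by
  have hM' : ‖(Complex.Gamma (β + k + 1))⁻¹‖ ≤ M := by
    have := hM k
    rwa [show β + 1 + (k : ℂ) = β + k + 1 by ring] at this
  have hrw : ζ ^ (2 * k) / ((4 : ℂ) ^ k * (k.factorial : ℂ) * Complex.Gamma (β + k + 1))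
      = (ζ ^ (2 * k) / ((4 : ℂ) ^ k * (k.factorial : ℂ))) * (Complex.Gamma (β + k + 1))⁻¹ := by
    rw [div_mul_eq_div_div, div_eq_mul_inv]
  rw [hrw, norm_mul]
  have hkf : (0:ℝ) < (k.factorial : ℝ) := Nat.cast_pos.mpr (Nat.factorial_pos k)
  have h1 : ‖ζ ^ (2 * k) / ((4 : ℂ) ^ k * (k.factorial : ℂ))‖ ≤ (‖ζ‖ ^ 2) ^ k / k.factorial := by
    rw [norm_div, norm_pow, norm_mul, norm_pow]
    have h4 : ‖(4 : ℂ)‖ = (4 : ℝ) := by norm_num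
    have hf : ‖((k.factorial : ℕ) : ℂ)‖ = (k.factorial : ℝ) := by simp
    rw [h4, hf, ← pow_mul]
    have hge : (k.factorial : ℝ) ≤ 4 ^ k * (k.factorial : ℝ) := by
      nlinarith [one_le_pow₀ (show (1:ℝ) ≤ 4 by norm_num) (n := k)]
    exact div_le_div_of_nonneg_left (by positivity) hkf hge
  calc ‖ζ ^ (2 * k) / ((4 : ℂ) ^ k * (k.factorial : ℂ))‖ * ‖(Complex.Gamma (β + k + 1))⁻¹‖
      ≤ ((‖ζ‖ ^ 2) ^ k / k.factorial) * M := by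
        apply mul_le_mul h1 hM' (norm_nonneg _)
        positivity
    _ = M * ((‖ζ‖ ^ 2) ^ k / k.factorial) := by ring

lemma summable_besselI_series (β ζ : ℂ) :
    Summable (fun k : ℕ => ζ ^ (2 * k) /
      ((4 : ℂ) ^ k * (k.factorial : ℂ) * Complex.Gamma (β + k + 1))) := by
  obtain ⟨M, hM0, hM⟩ := gammaInv_bound (β + 1)
  apply Summable.of_norm
  apply Summable.of_nonneg_of_le (fun k => norm_nonneg _) (besselI_term_norm_le β ζ hM)
  have := (Real.summable_pow_div_factorial (‖ζ‖ ^ 2)).mul_left M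
  simpa [mul_div_assoc] using this

lemma Fser_eq (β ζ : ℂ) :
    (∑' k : ℕ, ζ ^ (2 * k) / ((4 : ℂ) ^ k * (k.factorial : ℂ) * Complex.Gamma (β + k + 1)))
      = (Complex.Gamma (β + 1))⁻¹ + ζ ^ (2 : ℕ) * Gser β ζ := by
  rw [Summable.tsum_eq_zero_add (summable_besselI_series β ζ)]
  congr 1
  · norm_num
  · rw [Gser, ← tsum_mul_left]
    apply tsum_congr
    intro k
    have hcast : ((k + 1 : ℕ) : ℂ) = (k : ℂ) + 1 := by push_cast; ring
    rw [hcast, show β + ((k : ℂ) + 1) + 1 = β + k + 2 by ring,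
      show 2 * (k + 1) = 2 + 2 * k by ring, pow_add]
    ring

lemma Gser_bound (β : ℂ) :
    ∃ C : ℝ, 0 ≤ C ∧ ∀ ζ : ℂ, ‖ζ‖ ≤ 1 → ‖Gser β ζ‖ ≤ C := by
  obtain ⟨M, hM0, hM⟩ := gammaInv_bound (β + 2)
  have hMsum : Summable (fun k : ℕ => M / k.factorial) := by
    have := (Real.summable_pow_div_factorial 1).mul_left M
    simpa [mul_div_assoc, div_eq_mul_inv] using this
  refine ⟨∑' k : ℕ, M / k.factorial, tsum_nonneg (fun k => by positivity), ?_⟩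
  intro ζ hζ
  have hterm : ∀ k : ℕ, ‖ζ ^ (2 * k) /
      ((4 : ℂ) ^ (k + 1) * ((k + 1).factorial : ℂ) * Complex.Gamma (β + k + 2))‖
      ≤ M / k.factorial := by
    intro k
    have hM' : ‖(Complex.Gamma (β + k + 2))⁻¹‖ ≤ M := by
      have := hM k
      rwa [show β + 2 + (k : ℂ) = β + k + 2 by ring] at this
    have hrw : ζ ^ (2 * k) / ((4 : ℂ) ^ (k+1) * (((k+1).factorial : ℕ) : ℂ) * Complex.Gamma (β + k + 2))
        = (ζ ^ (2 * k) / ((4 : ℂ) ^ (k+1) * (((k+1).factorial : ℕ) : ℂ))) * (Complex.Gamma (β + k + 2))⁻¹ := by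
      rw [div_mul_eq_div_div, div_eq_mul_inv]
    rw [hrw, norm_mul]
    have hkf : (0:ℝ) < (k.factorial : ℝ) := Nat.cast_pos.mpr (Nat.factorial_pos k)
    have h1 : ‖ζ ^ (2 * k) / ((4 : ℂ) ^ (k+1) * (((k+1).factorial : ℕ) : ℂ))‖ ≤ 1 / k.factorial := by
      rw [norm_div, norm_pow, norm_mul, norm_pow]
      have h4 : ‖(4 : ℂ)‖ = (4 : ℝ) := by norm_num
      have hf : ‖(((k+1).factorial : ℕ) : ℂ)‖ = ((k+1).factorial : ℝ) := Complex.norm_natCast _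
      rw [h4, hf]
      have hnum : ‖ζ‖ ^ (2 * k) ≤ 1 := pow_le_one₀ (norm_nonneg _) hζ
      have hden : (k.factorial : ℝ) ≤ 4 ^ (k+1) * ((k+1).factorial : ℝ) := by
        have hle : (k.factorial : ℝ) ≤ ((k+1).factorial : ℝ) := by
          exact_mod_cast Nat.factorial_le (Nat.le_succ k)
        nlinarith [one_le_pow₀ (show (1:ℝ) ≤ 4 by norm_num) (n := k+1),
          (Nat.cast_pos (α := ℝ)).mpr (Nat.factorial_pos (k+1))]
      have hpos : (0:ℝ) < 4 ^ (k+1) * ((k+1).factorial : ℝ) := by positivity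
      calc ‖ζ‖ ^ (2 * k) / (4 ^ (k+1) * ((k+1).factorial : ℝ))
          ≤ 1 / (4 ^ (k+1) * ((k+1).factorial : ℝ)) := by gcongr
        _ ≤ 1 / (k.factorial : ℝ) := by
            apply div_le_div_of_nonneg_left (by norm_num) hkf hden
    calc ‖ζ ^ (2 * k) / ((4 : ℂ) ^ (k+1) * (((k+1).factorial : ℕ) : ℂ))‖ * ‖(Complex.Gamma (β + k + 2))⁻¹‖
        ≤ (1 / k.factorial) * M := by
          apply mul_le_mul h1 hM' (norm_nonneg _)
          positivity
      _ = M / k.factorial := by ring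
  have hsumnorm : Summable (fun k : ℕ => ‖ζ ^ (2 * k) /
      ((4 : ℂ) ^ (k + 1) * ((k + 1).factorial : ℂ) * Complex.Gamma (β + k + 2))‖) :=
    Summable.of_nonneg_of_le (fun k => norm_nonneg _) hterm hMsum
  calc ‖Gser β ζ‖ ≤ ∑' k : ℕ, ‖ζ ^ (2 * k) /
      ((4 : ℂ) ^ (k + 1) * ((k + 1).factorial : ℂ) * Complex.Gamma (β + k + 2))‖ :=
        norm_tsum_le_tsum_norm hsumnorm
    _ ≤ ∑' k : ℕ, M / k.factorial := Summable.tsum_le_tsum hterm hsumnorm hMsum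

lemma half_cpow {ζ : ℂ} (hζ : ζ ≠ 0) (c : ℂ) :
    (ζ / 2) ^ c = ζ ^ c * (2 : ℂ) ^ (-c) := by
  have hhalf : ζ / 2 = ζ * ((2⁻¹ : ℝ) : ℂ) := by push_cast; ring
  have hne : ζ * ((2⁻¹ : ℝ) : ℂ) ≠ 0 := by
    apply mul_ne_zero hζ; norm_num
  have hlog2 : Complex.log 2 = ((Real.log 2 : ℝ) : ℂ) := by
    rw [Complex.ofReal_log (by norm_num : (0:ℝ) ≤ 2)]
    norm_num
  rw [hhalf, Complex.cpow_def_of_ne_zero hne,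
    Complex.log_mul_ofReal 2⁻¹ (by norm_num) ζ hζ, Real.log_inv,
    Complex.cpow_def_of_ne_zero (two_ne_zero) (-c), hlog2,
    Complex.cpow_def_of_ne_zero hζ, ← Complex.exp_add]
  congr 1
  push_cast
  ring

lemma norm_cpow_le {w : ℂ} (hw : w ≠ 0) (c : ℂ) :
    ‖w ^ c‖ ≤ ‖w‖ ^ c.re * Real.exp (Real.pi * |c.im|) := by
  rw [Complex.norm_cpow_of_ne_zero hw]
  have harg : -(Real.pi * |c.im|) ≤ w.arg * c.im := by
    have h1 : |w.arg * c.im| ≤ Real.pi * |c.im| := by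
      rw [abs_mul]
      exact mul_le_mul_of_nonneg_right (Complex.abs_arg_le_pi w) (abs_nonneg _)
    linarith [neg_abs_le (w.arg * c.im)]
  have h2 : Real.exp (-(Real.pi * |c.im|)) ≤ Real.exp (w.arg * c.im) := Real.exp_le_exp.mpr harg
  have h3 : (0:ℝ) < Real.exp (-(Real.pi * |c.im|)) := Real.exp_pos _
  calc ‖w‖ ^ c.re / Real.exp (w.arg * c.im)
      ≤ ‖w‖ ^ c.re / Real.exp (-(Real.pi * |c.im|)) := by
        apply div_le_div_of_nonneg_left ?_ h3 h2
        positivity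
    _ = ‖w‖ ^ c.re * Real.exp (Real.pi * |c.im|) := by
        rw [Real.exp_neg, div_inv_eq_mul]

lemma le_norm_cpow {w : ℂ} (hw : w ≠ 0) (c : ℂ) :
    ‖w‖ ^ c.re ≤ Real.exp (Real.pi * |c.im|) * ‖w ^ c‖ := by
  rw [Complex.norm_cpow_of_ne_zero hw]
  have harg : w.arg * c.im ≤ Real.pi * |c.im| := by
    have h1 : |w.arg * c.im| ≤ Real.pi * |c.im| := by
      rw [abs_mul]
      exact mul_le_mul_of_nonneg_right (Complex.abs_arg_le_pi w) (abs_nonneg _)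
    linarith [le_abs_self (w.arg * c.im)]
  have h2 : Real.exp (w.arg * c.im) ≤ Real.exp (Real.pi * |c.im|) := Real.exp_le_exp.mpr harg
  calc ‖w‖ ^ c.re = ‖w‖ ^ c.re * 1 := (mul_one _).symm
    _ ≤ ‖w‖ ^ c.re * (Real.exp (Real.pi * |c.im|) / Real.exp (w.arg * c.im)) := by
        apply mul_le_mul_of_nonneg_left ?_ (by positivity)
        rw [le_div_iff₀ (Real.exp_pos _), one_mul]
        exact h2
    _ = Real.exp (Real.pi * |c.im|) * (‖w‖ ^ c.re / Real.exp (w.arg * c.im)) := by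
        ring

lemma sin_pi_mul_ne (α : ℂ) (h1 : 0 < α.re) (h2 : α.re < 1) :
    Complex.sin (α * (Real.pi : ℂ)) ≠ 0 := by
  rw [Ne, Complex.sin_eq_zero_iff]
  rintro ⟨k, hk⟩
  have hπ : ((Real.pi : ℝ) : ℂ) ≠ 0 := by
    simpa using Real.pi_ne_zero
  have hαk : α = (k : ℂ) := mul_right_cancel₀ hπ hk
  rw [hαk] at h1 h2
  simp only [Complex.intCast_re] at h1 h2
  have h1' : (0 : ℤ) < k := by exact_mod_cast h1
  have h2' : (k : ℤ) < 1 := by exact_mod_cast h2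
  omega

lemma uFun_eq (α : ℂ) (hΓα : Complex.Gamma α ≠ 0)
    (hsin : Complex.sin (α * (Real.pi : ℂ)) ≠ 0) {ζ : ℂ} (hζ : ζ ≠ 0) :
    ζ ^ α * besselK α ζ / ((2 : ℂ) ^ (α - 1) * Complex.Gamma α)
      = Complex.Gamma (1 - α) *
          (∑' k : ℕ, ζ ^ (2 * k) / ((4 : ℂ) ^ k * (k.factorial : ℂ) * Complex.Gamma (-α + (k : ℂ) + 1)))
        - Complex.Gamma (1 - α) * (2 : ℂ) ^ (-(2 * α)) * ζ ^ (2 * α) *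
          (∑' k : ℕ, ζ ^ (2 * k) / ((4 : ℂ) ^ k * (k.factorial : ℂ) * Complex.Gamma (α + (k : ℂ) + 1))) := by
  have hζα : ζ ^ α ≠ 0 := by
    simp [Complex.cpow_eq_zero_iff, hζ]
  have h2α : (2 : ℂ) ^ α ≠ 0 := by
    simp [Complex.cpow_eq_zero_iff]
  have hπ : (Real.pi : ℂ) = Complex.Gamma α * Complex.Gamma (1 - α) * Complex.sin (α * (Real.pi : ℂ)) := by
    have h := Complex.Gamma_mul_Gamma_one_sub α
    rw [mul_comm (Real.pi : ℂ) α] at h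
    field_simp at h
    exact h.symm
  rw [besselK, besselI, besselI, half_cpow hζ (-α), half_cpow hζ α, neg_neg,
    Complex.cpow_neg ζ α,
    show (2:ℂ) * α = α + α by ring,
    Complex.cpow_add _ _ hζ,
    show -(α + α) = -α + -α by ring,
    Complex.cpow_add _ _ (two_ne_zero), Complex.cpow_neg (2:ℂ) α,
    Complex.cpow_sub _ _ (two_ne_zero), Complex.cpow_one]
  nth_rewrite 1 [hπ]
  field_simp

end Helpers

theorem stmt1 (α : ℂ) (hα1 : 0 < α.re) (hα2 : α.re < 1)
    (ω : ℝ) (hω : ω ∈ Set.Ico 0 (Real.pi / 2))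
    (z : ℂ) (hz : z ∈ sector (Real.pi / 2 - ω))
    (δ : ℝ) (hδ : δ ∈ Set.Ioo 0 (Real.pi / 2 - ω - |z.arg|)) :
    Asymptotics.IsBigO (nhdsWithin 0 (sector (ω + δ)))
      (fun l : ℂ => uFun α z l -
        (1 - Complex.Gamma (1 - α) / ((2 : ℂ) ^ (2 * α) * Complex.Gamma (1 + α)) * (l * z) ^ (2 * α)))
      (fun l : ℂ => (l * z) ^ (2 : ℕ)) ∧
    Asymptotics.IsBigO (nhdsWithin 0 (sector (ω + δ)))
      (fun l : ℂ => uFun α z l - 1) (fun l : ℂ => l ^ (2 * α)) := by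
  obtain ⟨hδ0, hδ2⟩ := hδ
  obtain ⟨hω0, hω2⟩ := hω
  have hz0 : z ≠ 0 := by
    unfold sector at hz
    by_cases h : Real.pi / 2 - ω = 0
    · rw [if_pos h] at hz
      intro h0
      rw [h0] at hz
      simp at hz
    · rw [if_neg h] at hz
      exact hz.1
  have hwd : ω + δ ≠ 0 := by
    have : 0 < ω + δ := by linarith
    exact this.ne'
  have hS : ∀ l : ℂ, l ∈ sector (ω + δ) → l ≠ 0 := by
    intro l hl
    unfold sector at hl
    rw [if_neg hwd] at hl
    exact hl.1
  set L := nhdsWithin (0 : ℂ) (sector (ω + δ)) with hLdef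
  have hΓα : Complex.Gamma α ≠ 0 := Complex.Gamma_ne_zero_of_re_pos hα1
  have hΓ1α : Complex.Gamma (1 - α) ≠ 0 := by
    apply Complex.Gamma_ne_zero_of_re_pos
    rw [Complex.sub_re, Complex.one_re]
    linarith
  have hsin := sin_pi_mul_ne α hα1 hα2
  obtain ⟨Cm, hCm0, hCm⟩ := Gser_bound (-α)
  obtain ⟨Cp, hCp0, hCp⟩ := Gser_bound α
  set E := Real.exp (Real.pi * |(2 * α).im|) with hEdef
  have hE0 : (0:ℝ) < E := Real.exp_pos _
  have hRe2a : (0:ℝ) < (2 * α).re := by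
    simp only [Complex.mul_re, Complex.re_ofNat, Complex.im_ofNat]
    simpa using by linarith
  have hRe2b : (2 * α).re ≤ 2 := by
    simp only [Complex.mul_re, Complex.re_ofNat, Complex.im_ofNat]
    simpa using by linarith
  -- eventual facts
  have hr0 : (0:ℝ) < min 1 ‖z‖⁻¹ := by
    have : (0:ℝ) < ‖z‖ := norm_pos_iff.mpr hz0
    have h2 : (0:ℝ) < ‖z‖⁻¹ := by positivity
    exact lt_min one_pos h2
  have hev : ∀ᶠ l in L, l ≠ 0 ∧ ‖l‖ ≤ 1 ∧ ‖l * z‖ ≤ 1 := by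
    have h1 : ∀ᶠ l in L, l ∈ sector (ω + δ) := eventually_mem_nhdsWithin
    have h2 : ∀ᶠ l in L, ‖l‖ < min 1 ‖z‖⁻¹ := by
      apply Filter.Eventually.filter_mono nhdsWithin_le_nhds
      have hball := Metric.ball_mem_nhds (0 : ℂ) hr0
      apply Filter.eventually_of_mem hball
      intro y hy
      simpa [mem_ball_zero_iff] using hy
    filter_upwards [h1, h2] with l hl1 hl2
    refine ⟨hS l hl1, hl2.le.trans (min_le_left _ _), ?_⟩
    rw [norm_mul]
    have h3 : ‖l‖ ≤ ‖z‖⁻¹ := hl2.le.trans (min_le_right _ _)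
    calc ‖l‖ * ‖z‖ ≤ ‖z‖⁻¹ * ‖z‖ := mul_le_mul_of_nonneg_right h3 (norm_nonneg z)
      _ = 1 := inv_mul_cancel₀ (norm_ne_zero_iff.mpr hz0)
  -- the asymptotic building blocks
  have O1 : (fun l : ℂ => (l * z) ^ (2 * α)) =O[L] fun l : ℂ => l ^ (2 * α) := by
    apply Asymptotics.IsBigO.of_bound (‖z‖ ^ (2 * α).re * (E * E))
    filter_upwards [hev] with l hl
    obtain ⟨hl0, hl1, hlz1⟩ := hl
    have hlz0 : l * z ≠ 0 := mul_ne_zero hl0 hz0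
    have hz' : (0:ℝ) ≤ ‖z‖ ^ (2 * α).re := Real.rpow_nonneg (norm_nonneg _) _
    calc ‖(l * z) ^ (2 * α)‖ ≤ ‖l * z‖ ^ (2 * α).re * E := norm_cpow_le hlz0 _
      _ = ‖l‖ ^ (2 * α).re * ‖z‖ ^ (2 * α).re * E := by
          rw [norm_mul, Real.mul_rpow (norm_nonneg _) (norm_nonneg _)]
      _ ≤ (E * ‖l ^ (2 * α)‖) * ‖z‖ ^ (2 * α).re * E := by
          have := le_norm_cpow hl0 (2 * α)
          gcongr
      _ = ‖z‖ ^ (2 * α).re * (E * E) * ‖l ^ (2 * α)‖ := by ring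
  have O2 : (fun l : ℂ => (l * z) ^ (2 : ℕ)) =O[L] fun l : ℂ => l ^ (2 * α) := by
    apply Asymptotics.IsBigO.of_bound (‖z‖ ^ (2 : ℕ) * E)
    filter_upwards [hev] with l hl
    obtain ⟨hl0, hl1, hlz1⟩ := hl
    have hlpos : (0:ℝ) < ‖l‖ := norm_pos_iff.mpr hl0
    have key : ‖l‖ ^ (2 : ℕ) ≤ E * ‖l ^ (2 * α)‖ := by
      calc ‖l‖ ^ (2 : ℕ) = ‖l‖ ^ ((2 : ℕ) : ℝ) := (Real.rpow_natCast _ _).symm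
        _ ≤ ‖l‖ ^ (2 * α).re := by
            apply Real.rpow_le_rpow_of_exponent_ge hlpos hl1
            simpa using hRe2b
        _ ≤ E * ‖l ^ (2 * α)‖ := le_norm_cpow hl0 _
    calc ‖(l * z) ^ (2 : ℕ)‖ = ‖l‖ ^ (2 : ℕ) * ‖z‖ ^ (2 : ℕ) := by
          rw [norm_pow, norm_mul, mul_pow]
      _ ≤ (E * ‖l ^ (2 * α)‖) * ‖z‖ ^ (2 : ℕ) := by
          apply mul_le_mul_of_nonneg_right key (by positivity)
      _ = ‖z‖ ^ (2 : ℕ) * E * ‖l ^ (2 * α)‖ := by ring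
  have O3 : (fun l : ℂ => Gser (-α) (l * z)) =O[L] fun _ : ℂ => (1 : ℂ) := by
    apply Asymptotics.IsBigO.of_bound Cm
    filter_upwards [hev] with l hl
    rw [norm_one, mul_one]
    exact hCm _ hl.2.2
  have O4 : (fun l : ℂ => Gser α (l * z)) =O[L] fun _ : ℂ => (1 : ℂ) := by
    apply Asymptotics.IsBigO.of_bound Cp
    filter_upwards [hev] with l hl
    rw [norm_one, mul_one]
    exact hCp _ hl.2.2
  have O5 : (fun l : ℂ => (l * z) ^ (2 * α)) =O[L] fun _ : ℂ => (1 : ℂ) := by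
    apply Asymptotics.IsBigO.of_bound E
    filter_upwards [hev] with l hl
    obtain ⟨hl0, hl1, hlz1⟩ := hl
    have hlz0 : l * z ≠ 0 := mul_ne_zero hl0 hz0
    rw [norm_one, mul_one]
    calc ‖(l * z) ^ (2 * α)‖ ≤ ‖l * z‖ ^ (2 * α).re * E := norm_cpow_le hlz0 _
      _ ≤ 1 * E := by
          apply mul_le_mul_of_nonneg_right ?_ hE0.le
          exact Real.rpow_le_one (norm_nonneg _) hlz1 hRe2a.le
      _ = E := one_mul _
  -- the constant in the statement
  have hKc : Complex.Gamma (1 - α) / ((2 : ℂ) ^ (2 * α) * Complex.Gamma (1 + α))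
      = Complex.Gamma (1 - α) * (2 : ℂ) ^ (-(2 * α)) * (Complex.Gamma (α + 1))⁻¹ := by
    rw [Complex.cpow_neg, div_eq_mul_inv, mul_inv, add_comm (1 : ℂ) α]
    ring
  -- eventual identity for uFun
  have hEq : ∀ᶠ l in L, uFun α z l
      = 1 + Complex.Gamma (1 - α) * ((l * z) ^ (2 : ℕ) * Gser (-α) (l * z))
        - (Complex.Gamma (1 - α) * (2 : ℂ) ^ (-(2 * α))) *
          ((l * z) ^ (2 * α) * ((Complex.Gamma (α + 1))⁻¹ + (l * z) ^ (2 : ℕ) * Gser α (l * z))) := by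
    filter_upwards [hev] with l hl
    have hlz0 : l * z ≠ 0 := mul_ne_zero hl.1 hz0
    have h := uFun_eq α hΓα hsin hlz0
    rw [uFun, h, Fser_eq (-α) (l * z), Fser_eq α (l * z), show -α + 1 = 1 - α by ring]
    have hone : Complex.Gamma (1 - α) * (Complex.Gamma (1 - α))⁻¹ = 1 := mul_inv_cancel₀ hΓ1α
    linear_combination hone
  constructor
  · -- first claim
    have hf1 : (fun l : ℂ => uFun α z l -
        (1 - Complex.Gamma (1 - α) / ((2 : ℂ) ^ (2 * α) * Complex.Gamma (1 + α)) * (l * z) ^ (2 * α)))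
        =ᶠ[L] (fun l : ℂ =>
          Complex.Gamma (1 - α) * ((l * z) ^ (2 : ℕ) * Gser (-α) (l * z))
          - (Complex.Gamma (1 - α) * (2 : ℂ) ^ (-(2 * α))) *
              ((l * z) ^ (2 * α) * ((l * z) ^ (2 : ℕ) * Gser α (l * z)))) := by
      filter_upwards [hEq] with l h
      rw [h, hKc]
      ring
    apply hf1.trans_isBigO
    have A1 : (fun l : ℂ => Complex.Gamma (1 - α) * ((l * z) ^ (2 : ℕ) * Gser (-α) (l * z)))
        =O[L] fun l : ℂ => (l * z) ^ (2 : ℕ) := by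
      have h := ((Asymptotics.isBigO_refl (fun l : ℂ => (l * z) ^ (2 : ℕ)) L).mul O3).const_mul_left
        (Complex.Gamma (1 - α))
      exact h.congr_right (fun x => mul_one _)
    have A2 : (fun l : ℂ => (Complex.Gamma (1 - α) * (2 : ℂ) ^ (-(2 * α))) *
        ((l * z) ^ (2 * α) * ((l * z) ^ (2 : ℕ) * Gser α (l * z))))
        =O[L] fun l : ℂ => (l * z) ^ (2 : ℕ) := by
      have h := ((O5.mul ((Asymptotics.isBigO_refl (fun l : ℂ => (l * z) ^ (2 : ℕ)) L).mul O4))).const_mul_left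
        (Complex.Gamma (1 - α) * (2 : ℂ) ^ (-(2 * α)))
      exact h.congr_right (fun x => by simp)
    exact A1.sub A2
  · -- second claim
    have hf2 : (fun l : ℂ => uFun α z l - 1)
        =ᶠ[L] (fun l : ℂ =>
          Complex.Gamma (1 - α) * ((l * z) ^ (2 : ℕ) * Gser (-α) (l * z))
          - (Complex.Gamma (1 - α) * (2 : ℂ) ^ (-(2 * α)) * (Complex.Gamma (α + 1))⁻¹) * (l * z) ^ (2 * α)
          - (Complex.Gamma (1 - α) * (2 : ℂ) ^ (-(2 * α))) *
              ((l * z) ^ (2 * α) * ((l * z) ^ (2 : ℕ) * Gser α (l * z)))) := by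
      filter_upwards [hEq] with l h
      rw [h]
      ring
    apply hf2.trans_isBigO
    have B1 : (fun l : ℂ => Complex.Gamma (1 - α) * ((l * z) ^ (2 : ℕ) * Gser (-α) (l * z)))
        =O[L] fun l : ℂ => l ^ (2 * α) := by
      have h := (O2.mul O3).const_mul_left (Complex.Gamma (1 - α))
      exact h.congr_right (fun x => mul_one _)
    have B2 : (fun l : ℂ => (Complex.Gamma (1 - α) * (2 : ℂ) ^ (-(2 * α)) * (Complex.Gamma (α + 1))⁻¹)
        * (l * z) ^ (2 * α)) =O[L] fun l : ℂ => l ^ (2 * α) :=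
      O1.const_mul_left _
    have B3 : (fun l : ℂ => (Complex.Gamma (1 - α) * (2 : ℂ) ^ (-(2 * α))) *
        ((l * z) ^ (2 * α) * ((l * z) ^ (2 : ℕ) * Gser α (l * z))))
        =O[L] fun l : ℂ => l ^ (2 * α) := by
      have h := (O5.mul (O2.mul O4)).const_mul_left
        (Complex.Gamma (1 - α) * (2 : ℂ) ^ (-(2 * α)))
      exact h.congr_right (fun x => by simp)
    exact (B1.sub B2).sub B3
end

section
/- Let α ∈ ℂ with 0 < Re α < 1, ω ∈ [0, π/2) and λ ∈ S_ω. Then for all z ∈ S_{π/2−ω} one has the identity −z^{1−2α} (d/dz) u_{z,α}(λ) = c_α λ^{2α} u_{z,α−1}(λ), where c_α = Γ(1−α)/(2^{2α−1} Γ(α)); consequently −z^{1−2α} (d/dz) u_{z,α}(λ) → c_α λ^{2α} as z → 0 with z ∈ S_{π/2−ω}. -/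
open Complex Filter Set MeasureTheory

/-- The two-branch family `u_{z,β}` for `-1 < Re β < 1`, `Re β ≠ 0`. -/
noncomputable def uGen (β z l : ℂ) : ℂ :=
  if 0 < β.re then (l * z) ^ β * besselK β (l * z) / ((2 : ℂ) ^ (β - 1) * Complex.Gamma β)
  else (l * z) ^ (-β) * besselK (-β) (l * z) / ((2 : ℂ) ^ (-β - 1) * Complex.Gamma (-β))

/-- The constant `c_α = Γ(1-α)/(2^(2α-1) Γ(α))`. -/
noncomputable def cConst (α : ℂ) : ℂ :=
  Complex.Gamma (1 - α) / ((2 : ℂ) ^ (2 * α - 1) * Complex.Gamma α)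

open scoped Real Topology

namespace Stmt3Aux

/-- coefficient of the auxiliary entire series -/
noncomputable def cf (β : ℂ) (k : ℕ) : ℂ :=
  ((4 : ℂ) ^ k * (k.factorial : ℂ) * Complex.Gamma (β + (k : ℂ) + 1))⁻¹

/-- the auxiliary entire function `G_β(t) = ∑ t^k/(4^k k! Γ(β+k+1))` -/
noncomputable def Gs (β t : ℂ) : ℂ := ∑' k : ℕ, t ^ k * cf β k

lemma Gamma_arg_ne {β : ℂ} (hβ : -1 < β.re) (k : ℕ) :
    Complex.Gamma (β + (k : ℂ) + 1) ≠ 0 := by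
  apply Complex.Gamma_ne_zero_of_re_pos
  have h : (0:ℝ) ≤ (k:ℝ) := Nat.cast_nonneg k
  simp only [Complex.add_re, Complex.natCast_re, Complex.one_re]
  linarith

lemma add_k_ne {β : ℂ} (hβ : -1 < β.re) (k : ℕ) : β + (k : ℂ) + 1 ≠ 0 := by
  intro h
  have h' : (β + (k:ℂ) + 1).re = 0 := by rw [h]; simp
  have hk : (0:ℝ) ≤ (k:ℝ) := Nat.cast_nonneg k
  simp only [Complex.add_re, Complex.natCast_re, Complex.one_re] at h'
  linarith

lemma cf_succ {β : ℂ} (hβ : -1 < β.re) (k : ℕ) :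
    cf β (k+1) = cf β k / (4 * ((k:ℂ)+1) * (β + (k:ℂ) + 1)) := by
  unfold cf
  have h1 : β + ((k+1 : ℕ):ℂ) + 1 = (β + (k:ℂ) + 1) + 1 := by push_cast; ring
  rw [h1, Complex.Gamma_add_one _ (add_k_ne hβ k), pow_succ, Nat.factorial_succ, Nat.cast_mul]
  have h2 : ((4:ℂ))^k ≠ 0 := pow_ne_zero _ (by norm_num)
  have h3 : ((k.factorial : ℕ) : ℂ) ≠ 0 := Nat.cast_ne_zero.mpr k.factorial_ne_zero
  have h4 : ((k:ℂ)+1) ≠ 0 := Nat.cast_add_one_ne_zero k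
  have h5 := Gamma_arg_ne hβ k
  have h6 := add_k_ne hβ k
  push_cast
  field_simp

lemma summable_main {β : ℂ} (hβ : -1 < β.re) {r : ℝ} (hr : 0 ≤ r) :
    Summable (fun k : ℕ => ((k:ℝ)+1) * ‖cf β k‖ * r ^ k) := by
  apply summable_of_ratio_norm_eventually_le (r := 1/2) (by norm_num)
  filter_upwards [eventually_ge_atTop (max 1 ⌈r⌉₊)] with k hk
  have hk1 : 1 ≤ k := le_of_max_le_left hk
  have hk1' : (1:ℝ) ≤ (k:ℝ) := by exact_mod_cast hk1
  have hkr : r ≤ (k:ℝ) := le_trans (Nat.le_ceil r) (by exact_mod_cast le_of_max_le_right hk)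
  have hcfk : (0:ℝ) ≤ ‖cf β k‖ := norm_nonneg _
  rw [Real.norm_of_nonneg (by positivity), Real.norm_of_nonneg (by positivity)]
  have hsucc : ‖cf β (k+1)‖ = ‖cf β k‖ / ‖(4:ℂ) * ((k:ℂ)+1) * (β + (k:ℂ) + 1)‖ := by
    rw [cf_succ hβ, norm_div]
  have habs : ‖(4:ℂ) * ((k:ℂ)+1) * (β + (k:ℂ) + 1)‖
      = 4 * ((k:ℝ)+1) * ‖β + (k:ℂ) + 1‖ := by
    rw [norm_mul, norm_mul]
    have : ‖((k:ℂ)+1)‖ = (k:ℝ)+1 := by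
      rw [show ((k:ℂ)+1) = ((k+1:ℕ):ℂ) by push_cast; ring, Complex.norm_natCast]
      push_cast; ring
    rw [this]
    norm_num
  have hre : (k:ℝ) ≤ ‖β + (k:ℂ) + 1‖ := by
    have h1 : (β + (k:ℂ) + 1).re ≤ ‖β + (k:ℂ) + 1‖ := Complex.re_le_norm _
    have h2 : (β + (k:ℂ) + 1).re = β.re + (k:ℝ) + 1 := by
      simp [Complex.add_re, Complex.natCast_re, Complex.one_re]
    rw [h2] at h1
    linarith
  have hDpos : (0:ℝ) < 4 * ((k:ℝ)+1) * (k:ℝ) := by positivity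
  have hDge : 4 * ((k:ℝ)+1) * (k:ℝ) ≤ ‖(4:ℂ) * ((k:ℂ)+1) * (β + (k:ℂ) + 1)‖ := by
    rw [habs]
    have : (0:ℝ) ≤ 4 * ((k:ℝ)+1) := by positivity
    nlinarith
  have hD0 : (0:ℝ) < ‖(4:ℂ) * ((k:ℂ)+1) * (β + (k:ℂ) + 1)‖ := lt_of_lt_of_le hDpos hDge
  have key : ((k:ℝ)+2) * r / ‖(4:ℂ) * ((k:ℂ)+1) * (β + (k:ℂ) + 1)‖ ≤ 1/2 := by
    have h1 : ((k:ℝ)+2) * r ≤ 2*((k:ℝ)+1)*(k:ℝ) := by nlinarith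
    calc ((k:ℝ)+2) * r / ‖(4:ℂ) * ((k:ℂ)+1) * (β + (k:ℂ) + 1)‖
        ≤ 2*((k:ℝ)+1)*(k:ℝ) / (4*((k:ℝ)+1)*(k:ℝ)) := by
          apply div_le_div₀ (by positivity) h1 hDpos hDge
      _ = 1/2 := by
          rw [div_eq_iff (by positivity)]
          ring
  have hcr : (0:ℝ) ≤ ‖cf β k‖ * r ^ k := by positivity
  calc (((k+1:ℕ):ℝ)+1) * ‖cf β (k+1)‖ * r ^ (k+1)
      = (((k:ℝ)+2) * r / ‖(4:ℂ) * ((k:ℂ)+1) * (β + (k:ℂ) + 1)‖) * (‖cf β k‖ * r ^ k) := by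
        rw [hsucc, pow_succ]; push_cast; ring
    _ ≤ (1/2) * (‖cf β k‖ * r ^ k) := mul_le_mul_of_nonneg_right key hcr
    _ ≤ 1/2 * (((k:ℝ)+1) * ‖cf β k‖ * r ^ k) := by nlinarith

lemma summable_pow_cf {β : ℂ} (hβ : -1 < β.re) (t : ℂ) :
    Summable (fun k : ℕ => t ^ k * cf β k) := by
  apply Summable.of_norm_bounded (summable_main hβ (norm_nonneg t))
  intro k
  rw [norm_mul, norm_pow]
  have h1 : (1:ℝ) ≤ (k:ℝ)+1 := by linarith [Nat.cast_nonneg (α := ℝ) k]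
  calc ‖t‖^k * ‖cf β k‖ = 1 * (‖cf β k‖ * ‖t‖^k) := by ring
    _ ≤ ((k:ℝ)+1) * (‖cf β k‖ * ‖t‖^k) := mul_le_mul_of_nonneg_right h1 (by positivity)
    _ = ((k:ℝ)+1) * ‖cf β k‖ * ‖t‖^k := by ring

lemma summable_kpow_cf {β : ℂ} (hβ : -1 < β.re) (t : ℂ) :
    Summable (fun k : ℕ => (k:ℂ) * t ^ k * cf β k) := by
  apply Summable.of_norm_bounded (summable_main hβ (norm_nonneg t))
  intro k
  rw [norm_mul, norm_mul, norm_pow, Complex.norm_natCast]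
  calc (k:ℝ) * ‖t‖^k * ‖cf β k‖ = (k:ℝ) * (‖cf β k‖ * ‖t‖^k) := by ring
    _ ≤ ((k:ℝ)+1) * (‖cf β k‖ * ‖t‖^k) := mul_le_mul_of_nonneg_right (by linarith) (by positivity)
    _ = ((k:ℝ)+1) * ‖cf β k‖ * ‖t‖^k := by ring

lemma summable_dpow_cf {β : ℂ} (hβ : -1 < β.re) (t : ℂ) :
    Summable (fun k : ℕ => ((k:ℂ) * t ^ (k-1)) * cf β k) := by
  apply Summable.of_norm_bounded (summable_main hβ (by positivity : (0:ℝ) ≤ ‖t‖+1))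
  intro k
  rw [norm_mul, norm_mul, norm_pow, Complex.norm_natCast]
  have h1 : ‖t‖^(k-1) ≤ (‖t‖+1)^k :=
    le_trans (pow_le_pow_left₀ (norm_nonneg t) (by linarith [norm_nonneg t]) _)
      (pow_le_pow_right₀ (by linarith [norm_nonneg t]) (Nat.sub_le k 1))
  have h4 : (0:ℝ) ≤ (k:ℝ) := Nat.cast_nonneg k
  have key : (k:ℝ) * ‖t‖^(k-1) ≤ ((k:ℝ)+1) * (‖t‖+1)^k :=
    mul_le_mul (by linarith) h1 (by positivity) (by linarith)
  calc (k:ℝ) * ‖t‖^(k-1) * ‖cf β k‖ ≤ (((k:ℝ)+1) * (‖t‖+1)^k) * ‖cf β k‖ :=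
        mul_le_mul_of_nonneg_right key (norm_nonneg _)
    _ = ((k:ℝ)+1) * ‖cf β k‖ * (‖t‖+1)^k := by ring

lemma cf_shift {β : ℂ} (hβ : -1 < β.re) (k : ℕ) :
    ((k:ℂ)+1) * cf β (k+1) = (1/4) * cf (β+1) k := by
  unfold cf
  have h1 : β + ((k+1 : ℕ):ℂ) + 1 = (β + (k:ℂ) + 1) + 1 := by push_cast; ring
  have h2 : (β+1) + (k:ℂ) + 1 = (β + (k:ℂ) + 1) + 1 := by ring
  rw [h1, h2, Complex.Gamma_add_one _ (add_k_ne hβ k), pow_succ, Nat.factorial_succ, Nat.cast_mul]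
  have h3 : ((4:ℂ))^k ≠ 0 := pow_ne_zero _ (by norm_num)
  have h4 : ((k.factorial : ℕ) : ℂ) ≠ 0 := Nat.cast_ne_zero.mpr k.factorial_ne_zero
  have h5 : ((k:ℂ)+1) ≠ 0 := Nat.cast_add_one_ne_zero k
  have h6 := Gamma_arg_ne hβ k
  have h7 := add_k_ne hβ k
  push_cast
  field_simp

lemma shift_sum {β : ℂ} (hβ : -1 < β.re) (t : ℂ) :
    ∑' k : ℕ, ((k:ℂ)+1) * t ^ k * cf β (k+1) = (1/4) * Gs (β+1) t := by
  rw [Gs, ← tsum_mul_left]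
  apply tsum_congr
  intro k
  have h := cf_shift hβ k
  linear_combination t ^ k * h

lemma hasDerivAt_Gs {β : ℂ} (hβ : -1 < β.re) (t : ℂ) :
    HasDerivAt (Gs β) ((1/4) * Gs (β+1) t) t := by
  have hsum_d := summable_dpow_cf hβ t
  have key : HasDerivAt (fun s : ℂ => ∑' k : ℕ, s ^ k * cf β k)
      (∑' k : ℕ, ((k:ℂ) * t ^ (k-1)) * cf β k) t := by
    apply hasDerivAt_tsum_of_isPreconnected
      (u := fun k : ℕ => ((k:ℝ)+1) * ‖cf β k‖ * (‖t‖+1) ^ k)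
      (summable_main hβ (by positivity)) (Metric.isOpen_ball (x := (0:ℂ)) (ε := ‖t‖+1))
      ((convex_ball (0:ℂ) (‖t‖+1)).isPreconnected)
      (fun k y _ => (hasDerivAt_pow k y).mul_const _)
      ?_ ?_ (summable_pow_cf hβ t) ?_
    · intro k y hy
      have hy' : ‖y‖ ≤ ‖t‖+1 := by
        rw [Metric.mem_ball, dist_zero_right] at hy
        exact hy.le
      rw [norm_mul, norm_mul, norm_pow, Complex.norm_natCast]
      have h1 : ‖y‖^(k-1) ≤ (‖t‖+1)^k :=
        le_trans (pow_le_pow_left₀ (norm_nonneg y) hy' _)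
          (pow_le_pow_right₀ (by linarith [norm_nonneg t]) (Nat.sub_le k 1))
      have h4 : (0:ℝ) ≤ (k:ℝ) := Nat.cast_nonneg k
      have key' : (k:ℝ) * ‖y‖^(k-1) ≤ ((k:ℝ)+1) * (‖t‖+1)^k :=
        mul_le_mul (by linarith) h1 (by positivity) (by linarith)
      calc (k:ℝ) * ‖y‖^(k-1) * ‖cf β k‖ ≤ (((k:ℝ)+1) * (‖t‖+1)^k) * ‖cf β k‖ :=
            mul_le_mul_of_nonneg_right key' (norm_nonneg _)
        _ = ((k:ℝ)+1) * ‖cf β k‖ * (‖t‖+1)^k := by ring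
    · rw [Metric.mem_ball, dist_zero_right]
      linarith [norm_nonneg t]
    · rw [Metric.mem_ball, dist_zero_right]
      linarith [norm_nonneg t]
  have hval : ∑' k : ℕ, ((k:ℂ) * t ^ (k-1)) * cf β k = (1/4) * Gs (β+1) t := by
    rw [Summable.tsum_eq_zero_add hsum_d]
    have h0 : (((0:ℕ):ℂ) * t ^ (0-1)) * cf β 0 = 0 := by simp
    rw [h0, zero_add, ← shift_sum hβ t]
    apply tsum_congr
    intro k
    have : (k+1) - 1 = k := Nat.succ_sub_one k
    rw [this]
    push_cast
    ring
  rw [hval] at key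
  exact key

lemma cf_pred {β : ℂ} (hβ : 0 < β.re) (k : ℕ) : cf (β-1) k = (β + (k:ℂ)) * cf β k := by
  unfold cf
  have h1 : β - 1 + (k:ℂ) + 1 = β + (k:ℂ) := by ring
  have h2 : β + (k:ℂ) + 1 = (β + (k:ℂ)) + 1 := by ring
  have hne : β + (k:ℂ) ≠ 0 := by
    intro h
    have h' : (β + (k:ℂ)).re = 0 := by rw [h]; simp
    have hk : (0:ℝ) ≤ (k:ℝ) := Nat.cast_nonneg k
    simp only [Complex.add_re, Complex.natCast_re] at h'
    linarith
  have hΓ : Complex.Gamma (β + (k:ℂ)) ≠ 0 := by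
    apply Complex.Gamma_ne_zero_of_re_pos
    have hk : (0:ℝ) ≤ (k:ℝ) := Nat.cast_nonneg k
    simp only [Complex.add_re, Complex.natCast_re]
    linarith
  rw [h1, h2, Complex.Gamma_add_one _ hne]
  have h3 : ((4:ℂ))^k ≠ 0 := pow_ne_zero _ (by norm_num)
  have h4 : ((k.factorial : ℕ) : ℂ) ≠ 0 := Nat.cast_ne_zero.mpr k.factorial_ne_zero
  field_simp

lemma Gs_rec {β : ℂ} (hβ : 0 < β.re) (t : ℂ) :
    Gs (β-1) t = β * Gs β t + t/4 * Gs (β+1) t := by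
  have hβ' : (-1:ℝ) < β.re := by linarith
  have hsum1 := summable_pow_cf hβ' t
  have hsum2 := summable_kpow_cf hβ' t
  have hshift2 : ∑' k : ℕ, (k:ℂ) * t ^ k * cf β k = t/4 * Gs (β+1) t := by
    rw [Summable.tsum_eq_zero_add hsum2]
    have h0 : ((0:ℕ):ℂ) * t ^ 0 * cf β 0 = 0 := by simp
    rw [h0, zero_add]
    have hcg : ∀ k : ℕ, ((k+1:ℕ):ℂ) * t ^ (k+1) * cf β (k+1)
        = t * (((k:ℂ)+1) * t ^ k * cf β (k+1)) := by
      intro k; push_cast; ring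
    rw [tsum_congr hcg, tsum_mul_left, shift_sum hβ' t]
    ring
  calc Gs (β-1) t = ∑' k : ℕ, (β * (t ^ k * cf β k) + (k:ℂ) * t ^ k * cf β k) := by
        apply tsum_congr
        intro k
        rw [cf_pred hβ k]
        ring
    _ = β * Gs β t + ∑' k : ℕ, (k:ℂ) * t ^ k * cf β k := by
        rw [Summable.tsum_add (hsum1.mul_left β) hsum2, tsum_mul_left]
        rfl
    _ = β * Gs β t + t/4 * Gs (β+1) t := by rw [hshift2]

lemma Gs_zero (β : ℂ) : Gs β 0 = (Complex.Gamma (β+1))⁻¹ := by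
  rw [Gs, tsum_eq_single 0 (fun k hk => by rw [zero_pow hk, zero_mul])]
  simp [cf]

lemma besselI_eq (β ζ : ℂ) : besselI β ζ = (ζ/2) ^ β * Gs β (ζ^2) := by
  unfold besselI Gs cf
  congr 1
  apply tsum_congr
  intro k
  rw [pow_mul, div_eq_mul_inv]

lemma mul_cpow_arg {x y : ℂ} (hx : x ≠ 0) (hy : y ≠ 0)
    (h : x.arg + y.arg ∈ Set.Ioc (-Real.pi) Real.pi) (c : ℂ) :
    (x*y) ^ c = x ^ c * y ^ c := by
  rw [Complex.cpow_def_of_ne_zero (mul_ne_zero hx hy), Complex.log_mul hx hy h, add_mul,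
    Complex.exp_add, Complex.cpow_def_of_ne_zero hx, Complex.cpow_def_of_ne_zero hy]

lemma half_cpow {w : ℂ} (hw : w ≠ 0) (c : ℂ) : (w/2) ^ c = w ^ c / (2:ℂ) ^ c := by
  have h2 : ((2:ℂ))⁻¹ ≠ 0 := by norm_num
  have harg : ((2:ℂ)⁻¹).arg = 0 := by
    rw [show ((2:ℂ))⁻¹ = (((2:ℝ))⁻¹ : ℝ) by norm_num]
    exact Complex.arg_ofReal_of_nonneg (by norm_num)
  have h : w.arg + ((2:ℂ)⁻¹).arg ∈ Set.Ioc (-Real.pi) Real.pi := by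
    rw [harg, add_zero]
    exact Complex.arg_mem_Ioc w
  rw [div_eq_mul_inv, mul_cpow_arg hw h2 h c, Complex.inv_cpow _ _ (by
    rw [show (2:ℂ) = ((2:ℝ):ℂ) by norm_num, Complex.arg_ofReal_of_nonneg (by norm_num)]
    exact Real.pi_ne_zero.symm), div_eq_mul_inv]

lemma uGen_repr {β w : ℂ} (hw : w ≠ 0) :
    w ^ β * besselK β w / ((2:ℂ) ^ (β-1) * Complex.Gamma β)
      = ((Real.pi:ℂ)/(2*Complex.sin (β*(Real.pi:ℂ))) / ((2:ℂ) ^ (β-1) * Complex.Gamma β)) *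
        ((2:ℂ) ^ β * Gs (-β) (w^2) - (2:ℂ) ^ (-β) * w ^ (2*β) * Gs β (w^2)) := by
  have hw2 : w ^ β ≠ 0 := by simp [Complex.cpow_eq_zero_iff, hw]
  have h2b : (2:ℂ) ^ β ≠ 0 := by simp [Complex.cpow_eq_zero_iff]
  have hA : w ^ β * (w/2) ^ (-β) = (2:ℂ) ^ β := by
    rw [Complex.cpow_neg, half_cpow hw]
    field_simp
  have hB : w ^ β * (w/2) ^ β = (2:ℂ) ^ (-β) * w ^ (2*β) := by
    rw [half_cpow hw, Complex.cpow_neg, two_mul, Complex.cpow_add _ _ hw]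
    field_simp
  rw [besselK, besselI_eq, besselI_eq]
  linear_combination ((Real.pi:ℂ)/(2*Complex.sin (β*(Real.pi:ℂ))) / ((2:ℂ) ^ (β-1) * Complex.Gamma β)) *
    (Gs (-β) (w^2) * hA - Gs β (w^2) * hB)

lemma cpow_arith {x : ℂ} (hx : x ≠ 0) {c e : ℂ} (m n : ℤ)
    (h : e = (m:ℂ) + (n:ℂ) * c) :
    x ^ e = x ^ m * (x ^ c) ^ n := by
  rw [h, Complex.cpow_add _ _ hx, Complex.cpow_intCast, Complex.cpow_int_mul]

lemma sector_isOpen {θ : ℝ} (hθ1 : 0 < θ) (hθ2 : θ ≤ Real.pi/2) : IsOpen (sector θ) := by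
  have hpi := Real.pi_pos
  rw [sector, if_neg (ne_of_gt hθ1)]
  rw [isOpen_iff_mem_nhds]
  rintro z ⟨hz0, hzarg⟩
  have hslit : z ∈ Complex.slitPlane := by
    rw [Complex.mem_slitPlane_iff_arg]
    refine ⟨fun h => ?_, hz0⟩
    rw [h, abs_of_pos hpi] at hzarg
    linarith
  have harg : ContinuousAt (fun w : ℂ => |w.arg|) z := (Complex.continuousAt_arg hslit).abs
  have h1 : ∀ᶠ w in 𝓝 z, |w.arg| < θ := harg.eventually_lt continuousAt_const hzarg
  have h2 : {w : ℂ | w ≠ 0} ∈ 𝓝 z := isOpen_ne.mem_nhds hz0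
  filter_upwards [h1, h2] with w hw1 hw2
  exact ⟨hw2, hw1⟩

end Stmt3Aux

open Stmt3Aux in
set_option maxHeartbeats 2000000 in
theorem stmt3 (α : ℂ) (hα1 : 0 < α.re) (hα2 : α.re < 1)
    (ω : ℝ) (hω : ω ∈ Set.Ico 0 (Real.pi / 2))
    (l : ℂ) (hl : l ∈ sector ω) :
    (∀ z ∈ sector (Real.pi / 2 - ω),
      -z ^ (1 - 2 * α) * deriv (fun w => uGen α w l) z
        = cConst α * l ^ (2 * α) * uGen (α - 1) z l) ∧
    Filter.Tendsto (fun z : ℂ => -z ^ (1 - 2 * α) * deriv (fun w => uGen α w l) z)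
      (nhdsWithin 0 (sector (Real.pi / 2 - ω))) (nhds (cConst α * l ^ (2 * α))) := by
  obtain ⟨hω0, hωlt⟩ := hω
  have hpi := Real.pi_pos
  have hl0 : l ≠ 0 := by
    by_cases h : ω = 0
    · rw [sector, if_pos h] at hl
      intro h0
      rw [h0] at hl
      simp at hl
    · rw [sector, if_neg h] at hl
      exact hl.1
  have hlarg : |l.arg| ≤ ω := by
    by_cases h : ω = 0
    · rw [sector, if_pos h] at hl
      rw [h, Complex.arg_eq_zero_iff.mpr ⟨hl.1.le, hl.2⟩]
      simp
    · rw [sector, if_neg h] at hl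
      exact le_of_lt hl.2
  have hθpos : 0 < Real.pi/2 - ω := by linarith
  have hsec : sector (Real.pi/2 - ω) = {ζ : ℂ | ζ ≠ 0 ∧ |ζ.arg| < Real.pi/2 - ω} := by
    rw [sector, if_neg (ne_of_gt hθpos)]
  have hopen : IsOpen (sector (Real.pi/2 - ω)) := sector_isOpen hθpos (by linarith)
  have hzfacts : ∀ z ∈ sector (Real.pi/2 - ω), z ≠ 0 ∧ l*z ≠ 0 ∧ (l*z) ∈ Complex.slitPlane ∧
      ∀ c : ℂ, (l*z) ^ c = l ^ c * z ^ c := by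
    intro z hz
    rw [hsec] at hz
    obtain ⟨hz0, hzarg⟩ := hz
    have habs : |l.arg + z.arg| < Real.pi/2 :=
      lt_of_le_of_lt (abs_add_le _ _) (by linarith [abs_nonneg l.arg, abs_nonneg z.arg])
    obtain ⟨hsg1, hsg2⟩ := abs_lt.mp habs
    have hioc : l.arg + z.arg ∈ Set.Ioc (-Real.pi) Real.pi := ⟨by linarith, by linarith⟩
    have harg : (l*z).arg = l.arg + z.arg := (Complex.arg_mul_eq_add_arg_iff hl0 hz0).mpr hioc
    have hlz0 : l*z ≠ 0 := mul_ne_zero hl0 hz0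
    refine ⟨hz0, hlz0, ?_, fun c => mul_cpow_arg hl0 hz0 hioc c⟩
    rw [Complex.mem_slitPlane_iff_arg]
    refine ⟨?_, hlz0⟩
    rw [harg]
    intro h
    rw [h, abs_of_pos hpi] at habs
    linarith
  have hΓα : Complex.Gamma α ≠ 0 := Complex.Gamma_ne_zero_of_re_pos hα1
  have hΓ1α : Complex.Gamma (1-α) ≠ 0 := by
    apply Complex.Gamma_ne_zero_of_re_pos
    simp only [Complex.sub_re, Complex.one_re]
    linarith
  have hsin : Complex.sin (α * (Real.pi:ℂ)) ≠ 0 := by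
    intro h
    obtain ⟨k, hk⟩ := Complex.sin_eq_zero_iff.mp h
    have hπ : ((Real.pi : ℝ) : ℂ) ≠ 0 := Complex.ofReal_ne_zero.mpr Real.pi_ne_zero
    have hαk : α = (k:ℂ) := mul_right_cancel₀ hπ hk
    have h1 : α.re = (k:ℝ) := by rw [hαk]; simp
    rw [h1] at hα1 hα2
    have h2 : (0:ℤ) < k := by exact_mod_cast hα1
    have h3 : k < (1:ℤ) := by exact_mod_cast hα2
    omega
  have hnegα : (-1:ℝ) < (-α).re := by simp only [Complex.neg_re]; linarith
  have hαre' : (-1:ℝ) < α.re := by linarith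
  have hα1re : (-1:ℝ) < (α-1).re := by simp only [Complex.sub_re, Complex.one_re]; linarith
  have h1αre : (-1:ℝ) < (1-α).re := by simp only [Complex.sub_re, Complex.one_re]; linarith
  have h2ne : (2:ℂ) ≠ 0 := two_ne_zero
  have hP2 : (2:ℂ)^α ≠ 0 := by simp [Complex.cpow_eq_zero_iff]
  have hLa : l^α ≠ 0 := by simp [Complex.cpow_eq_zero_iff, hl0]
  set C1 : ℂ := (Real.pi:ℂ)/(2*Complex.sin (α*(Real.pi:ℂ))) / ((2:ℂ)^(α-1) * Complex.Gamma α) with hC1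
  set C2 : ℂ := (Real.pi:ℂ)/(2*Complex.sin ((1-α)*(Real.pi:ℂ))) / ((2:ℂ)^(1-α-1) * Complex.Gamma (1-α)) with hC2
  have hrepr : ∀ w ∈ sector (Real.pi/2 - ω), uGen α w l
      = C1 * ((2:ℂ)^α * Gs (-α) ((l*w)^2) - (2:ℂ)^(-α) * (l*w)^(2*α) * Gs α ((l*w)^2)) := by
    intro w hw
    obtain ⟨_, hlw0, _, _⟩ := hzfacts w hw
    unfold uGen
    rw [if_pos hα1, hC1]
    exact uGen_repr hlw0
  have hrepr' : ∀ z ∈ sector (Real.pi/2 - ω), uGen (α-1) z l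
      = C2 * ((2:ℂ)^(1-α) * Gs (-(1-α)) ((l*z)^2) -
          (2:ℂ)^(-(1-α)) * (l*z)^(2*(1-α)) * Gs (1-α) ((l*z)^2)) := by
    intro z hz
    obtain ⟨_, hlz0, _, _⟩ := hzfacts z hz
    have hlt : ¬ (0 < (α-1).re) := by
      simp only [Complex.sub_re, Complex.one_re]
      linarith
    unfold uGen
    rw [if_neg hlt, show -(α-1) = 1-α from by ring, hC2]
    exact uGen_repr hlz0
  rw [show -((1:ℂ)-α) = α - 1 from by ring] at hrepr'
  have hpart1 : ∀ z ∈ sector (Real.pi/2 - ω),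
      -z^(1-2*α) * deriv (fun w => uGen α w l) z = cConst α * l^(2*α) * uGen (α-1) z l := by
    intro z hz
    obtain ⟨hz0, hlz0, hslit, hsplit⟩ := hzfacts z hz
    have hZa : z^α ≠ 0 := by simp [Complex.cpow_eq_zero_iff, hz0]
    have hT : HasDerivAt (fun w : ℂ => (l*w)^2) (2*l^2*z) z := by
      have h := ((hasDerivAt_id' z).const_mul l).fun_pow 2
      refine h.congr_deriv ?_
      push_cast
      ring
    have h1 : HasDerivAt (fun w : ℂ => Gs (-α) ((l*w)^2))
        (1/4 * Gs (-α+1) ((l*z)^2) * (2*l^2*z)) z := by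
      have := (hasDerivAt_Gs hnegα ((l*z)^2)).comp z hT; exact this
    have h3 : HasDerivAt (fun w : ℂ => Gs α ((l*w)^2))
        (1/4 * Gs (α+1) ((l*z)^2) * (2*l^2*z)) z := by
      have := (hasDerivAt_Gs hαre' ((l*z)^2)).comp z hT; exact this
    have h2 : HasDerivAt (fun w : ℂ => (l*w)^(2*α)) (2*α*(l*z)^(2*α-1)*l) z := by
      have h := ((hasDerivAt_id' z).const_mul l).cpow_const (c := 2*α) hslit
      convert h using 1
      show _ = 2 * α * (l * z) ^ (2 * α - 1) * (l * 1)
      ring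
    have hF : HasDerivAt (fun w : ℂ => C1 * ((2:ℂ)^α * Gs (-α) ((l*w)^2) -
        (2:ℂ)^(-α) * ((l*w)^(2*α) * Gs α ((l*w)^2))))
        (C1 * ((2:ℂ)^α * (1/4 * Gs (-α+1) ((l*z)^2) * (2*l^2*z)) -
          (2:ℂ)^(-α) * (2*α*(l*z)^(2*α-1)*l * Gs α ((l*z)^2) +
            (l*z)^(2*α) * (1/4 * Gs (α+1) ((l*z)^2) * (2*l^2*z))))) z :=
      ((h1.const_mul _).sub ((h2.mul h3).const_mul _)).const_mul C1
    have hEq : (fun w => uGen α w l) =ᶠ[nhds z] (fun w : ℂ => C1 * ((2:ℂ)^α * Gs (-α) ((l*w)^2) -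
        (2:ℂ)^(-α) * ((l*w)^(2*α) * Gs α ((l*w)^2)))) := by
      filter_upwards [hopen.mem_nhds hz] with w hw
      rw [hrepr w hw]
      ring
    have hud := (hF.congr_of_eventuallyEq hEq).deriv
    rw [hud, hrepr' z hz]
    rw [show (-α+1 : ℂ) = 1-α from by ring]
    rw [Gs_rec hα1 ((l*z)^2)]
    unfold cConst
    rw [hC1, hC2]
    rw [show ((1:ℂ)-α)*(Real.pi:ℂ) = (Real.pi:ℂ) - α*(Real.pi:ℂ) from by ring, Complex.sin_pi_sub]
    rw [hsplit (2*α), hsplit (2*α-1), hsplit (2*(1-α))]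
    rw [cpow_arith hz0 1 (-2) (show (1:ℂ)-2*α = ((1:ℤ):ℂ) + ((-2:ℤ):ℂ)*α by push_cast; ring),
        cpow_arith hl0 0 2 (show (2*α : ℂ) = ((0:ℤ):ℂ) + ((2:ℤ):ℂ)*α by push_cast; ring),
        cpow_arith hz0 0 2 (show (2*α : ℂ) = ((0:ℤ):ℂ) + ((2:ℤ):ℂ)*α by push_cast; ring),
        cpow_arith hl0 (-1) 2 (show (2*α-1 : ℂ) = ((-1:ℤ):ℂ) + ((2:ℤ):ℂ)*α by push_cast; ring),
        cpow_arith hz0 (-1) 2 (show (2*α-1 : ℂ) = ((-1:ℤ):ℂ) + ((2:ℤ):ℂ)*α by push_cast; ring),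
        cpow_arith hl0 2 (-2) (show (2*((1:ℂ)-α) : ℂ) = ((2:ℤ):ℂ) + ((-2:ℤ):ℂ)*α by push_cast; ring),
        cpow_arith hz0 2 (-2) (show (2*((1:ℂ)-α) : ℂ) = ((2:ℤ):ℂ) + ((-2:ℤ):ℂ)*α by push_cast; ring),
        cpow_arith h2ne (-1) 1 (show (α-1 : ℂ) = ((-1:ℤ):ℂ) + ((1:ℤ):ℂ)*α by push_cast; ring),
        cpow_arith h2ne 0 (-1) (show (-α:ℂ) = ((0:ℤ):ℂ) + ((-1:ℤ):ℂ)*α by push_cast; ring),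
        cpow_arith h2ne 1 (-1) (show ((1:ℂ)-α:ℂ) = ((1:ℤ):ℂ) + ((-1:ℤ):ℂ)*α by push_cast; ring),
        cpow_arith h2ne (-1) 2 (show (2*α-1 : ℂ) = ((-1:ℤ):ℂ) + ((2:ℤ):ℂ)*α by push_cast; ring),
        cpow_arith h2ne 0 (-1) (show ((1:ℂ)-α-1:ℂ) = ((0:ℤ):ℂ) + ((-1:ℤ):ℂ)*α by push_cast; ring)]
    simp only [zpow_one, zpow_zero, zpow_neg, zpow_two, zpow_ofNat]
    have hsin2 : Complex.sin ((Real.pi:ℂ) * α) ≠ 0 := by rw [mul_comm]; exact hsin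
    field_simp
    ring
  refine ⟨hpart1, ?_⟩
  have hEq2 : (fun z : ℂ => cConst α * l^(2*α) * uGen (α-1) z l)
      =ᶠ[nhdsWithin 0 (sector (Real.pi/2-ω))]
      (fun z : ℂ => -z^(1-2*α) * deriv (fun w => uGen α w l) z) := by
    filter_upwards [self_mem_nhdsWithin] with z hz
    exact (hpart1 z hz).symm
  apply Filter.Tendsto.congr' hEq2
  have hu1 : Tendsto (fun z : ℂ => uGen (α-1) z l) (nhdsWithin 0 (sector (Real.pi/2-ω))) (nhds 1) := by
    have hsq : Tendsto (fun z : ℂ => (l*z)^2) (nhdsWithin 0 (sector (Real.pi/2-ω))) (nhds 0) := by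
      have hc : Continuous (fun z : ℂ => (l*z)^2) := by continuity
      have h : Tendsto (fun z : ℂ => (l*z)^2) (nhdsWithin 0 (sector (Real.pi/2-ω)))
          (nhds ((l*0)^2)) := (hc.tendsto 0).mono_left nhdsWithin_le_nhds
      simpa using h
    have hGs1 : Tendsto (fun z : ℂ => Gs (α-1) ((l*z)^2)) (nhdsWithin 0 (sector (Real.pi/2-ω)))
        (nhds (Gs (α-1) 0)) :=
      ((hasDerivAt_Gs hα1re 0).continuousAt.tendsto).comp hsq
    have hGs2 : Tendsto (fun z : ℂ => Gs (1-α) ((l*z)^2)) (nhdsWithin 0 (sector (Real.pi/2-ω)))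
        (nhds (Gs (1-α) 0)) :=
      ((hasDerivAt_Gs h1αre 0).continuousAt.tendsto).comp hsq
    have hcre : (0:ℝ) < (2*((1:ℂ)-α)).re := by
      have h : (2*((1:ℂ)-α)).re = 2 - 2*α.re := by
        simp [Complex.mul_re, Complex.sub_re, Complex.sub_im, Complex.one_re, Complex.one_im]
        ring
      rw [h]
      linarith
    have hpow : Tendsto (fun z : ℂ => (l*z)^(2*((1:ℂ)-α))) (nhdsWithin 0 (sector (Real.pi/2-ω)))
        (nhds 0) := by
      apply squeeze_zero_norm (a := fun z : ℂ => ‖l*z‖ ^ ((2*((1:ℂ)-α)).re)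
        * Real.exp (Real.pi * |(2*((1:ℂ)-α)).im|))
      · intro z
        by_cases h : l*z = 0
        · rw [h]
          have hc0 : (2*((1:ℂ)-α)) ≠ 0 := by
            intro hc
            rw [hc] at hcre
            simp at hcre
          rw [Complex.zero_cpow hc0]
          simp only [norm_zero]
          positivity
        · refine le_trans (Complex.norm_cpow_le (l*z) (2*((1:ℂ)-α))) ?_
          rw [div_eq_mul_inv, ← Real.exp_neg]
          apply mul_le_mul_of_nonneg_left _ (Real.rpow_nonneg (norm_nonneg _) _)
          apply Real.exp_le_exp.mpr
          have h1 : |(l*z).arg * (2*((1:ℂ)-α)).im| ≤ Real.pi * |(2*((1:ℂ)-α)).im| := by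
            rw [abs_mul]
            exact mul_le_mul_of_nonneg_right (Complex.abs_arg_le_pi _) (abs_nonneg _)
          have h2 := neg_abs_le ((l*z).arg * (2*((1:ℂ)-α)).im)
          linarith
      · have habs : Tendsto (fun z : ℂ => ‖l*z‖) (nhdsWithin 0 (sector (Real.pi/2-ω)))
            (nhds 0) := by
          have hc : Continuous fun z : ℂ => ‖l*z‖ :=
            continuous_norm.comp (continuous_const.mul continuous_id)
          have h : Tendsto (fun z : ℂ => ‖l*z‖) (nhdsWithin 0 (sector (Real.pi/2-ω)))
              (nhds ‖l*0‖) := (hc.tendsto 0).mono_left nhdsWithin_le_nhds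
          simpa using h
        have hrpow : Tendsto (fun x : ℝ => x ^ ((2*((1:ℂ)-α)).re)) (nhds 0) (nhds 0) := by
          have h := (Real.continuousAt_rpow_const 0 ((2*((1:ℂ)-α)).re) (Or.inr hcre.le)).tendsto
          rwa [Real.zero_rpow (ne_of_gt hcre)] at h
        have h := (hrpow.comp habs).mul_const (Real.exp (Real.pi * |(2*((1:ℂ)-α)).im|))
        simpa using h
    have hcomb : Tendsto (fun z : ℂ => C2 * ((2:ℂ)^(1-α) * Gs (α-1) ((l*z)^2) -
        (2:ℂ)^(α-1) * (l*z)^(2*(1-α)) * Gs (1-α) ((l*z)^2)))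
        (nhdsWithin 0 (sector (Real.pi/2-ω)))
        (nhds (C2 * ((2:ℂ)^(1-α) * Gs (α-1) 0 - (2:ℂ)^(α-1) * 0 * Gs (1-α) 0))) :=
      ((hGs1.const_mul _).sub (((hpow.const_mul _).mul hGs2))).const_mul C2
    have hV : C2 * ((2:ℂ)^(1-α) * Gs (α-1) 0 - (2:ℂ)^(α-1) * 0 * Gs (1-α) 0) = 1 := by
      rw [Gs_zero, show α - 1 + 1 = α from by ring, hC2]
      rw [show ((1:ℂ)-α)*(Real.pi:ℂ) = (Real.pi:ℂ) - α*(Real.pi:ℂ) from by ring,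
        Complex.sin_pi_sub]
      have href := Complex.Gamma_mul_Gamma_one_sub α
      rw [mul_comm ((Real.pi:ℂ)) α] at href
      rw [eq_div_iff hsin] at href
      rw [cpow_arith h2ne 0 (-1) (show ((1:ℂ)-α-1:ℂ) = ((0:ℤ):ℂ) + ((-1:ℤ):ℂ)*α by push_cast; ring),
          cpow_arith h2ne 1 (-1) (show ((1:ℂ)-α:ℂ) = ((1:ℤ):ℂ) + ((-1:ℤ):ℂ)*α by push_cast; ring)]
      simp only [zpow_one, zpow_zero, zpow_neg, zpow_ofNat]
      have hsin2 : Complex.sin ((Real.pi:ℂ) * α) ≠ 0 := by rw [mul_comm]; exact hsin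
      field_simp
      linear_combination (-2:ℂ) * href - 2 * Complex.Gamma α * Complex.Gamma (1-α) * congrArg Complex.sin (mul_comm (Real.pi:ℂ) α)
    rw [hV] at hcomb
    refine Filter.Tendsto.congr' ?_ hcomb
    filter_upwards [self_mem_nhdsWithin] with z hz
    exact (hrepr' z hz).symm
  have h := hu1.const_mul (cConst α * l^(2*α))
  simpa using h
end

section
/- Let α ∈ ℂ with 0 < Re α < 1, ω ∈ [0, π/2) and λ ∈ S_ω. Then the maps z ↦ v_z(λ) and z ↦ w_z(λ) are holomorphic on S_{π/2−ω}, and as z → 0 with z ∈ S_{π/2−ω} one has: v_z(λ) → 1, −z^{1−2α}(d/dz)v_z(λ) → 0, w_z(λ) → 0, and z^{1−2α}(d/dz)w_z(λ) → 1. -/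
open Complex Filter Set MeasureTheory

open scoped Topology Real

namespace Stmt8Aux

noncomputable def bc (β : ℂ) (n : ℕ) : ℂ :=
  ((4 : ℂ) ^ n * (n.factorial : ℂ) * Complex.Gamma (β + (n : ℂ) + 1))⁻¹

noncomputable def bF (β : ℂ) : ℂ → ℂ := (FormalMultilinearSeries.ofScalars ℂ (bc β)).sum

variable {β : ℂ}

lemma re_pos (hβ : (-1 : ℝ) < β.re) (n : ℕ) : 0 < (β + (n : ℂ) + 1).re := by
  simp only [Complex.add_re, Complex.natCast_re, Complex.one_re]
  have : (0:ℝ) ≤ n := Nat.cast_nonneg n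
  linarith

lemma arg_ne (hβ : (-1 : ℝ) < β.re) (n : ℕ) : β + (n : ℂ) + 1 ≠ 0 := by
  intro h
  have := re_pos hβ n
  rw [h] at this
  simp at this

lemma gamma_ne (hβ : (-1 : ℝ) < β.re) (n : ℕ) : Complex.Gamma (β + (n : ℂ) + 1) ≠ 0 :=
  Complex.Gamma_ne_zero_of_re_pos (re_pos hβ n)

lemma bc_ne (hβ : (-1 : ℝ) < β.re) (n : ℕ) : bc β n ≠ 0 := by
  apply inv_ne_zero
  exact mul_ne_zero (mul_ne_zero (pow_ne_zero _ (by norm_num))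
    (Nat.cast_ne_zero.mpr n.factorial_ne_zero)) (gamma_ne hβ n)

lemma bc_succ (hβ : (-1 : ℝ) < β.re) (n : ℕ) :
    bc β (n + 1) = bc β n / (4 * ((n : ℂ) + 1) * (β + (n : ℂ) + 1)) := by
  have hne : β + (n : ℂ) + 1 ≠ 0 := arg_ne hβ n
  have hΓ : Complex.Gamma (β + (n : ℂ) + 1) ≠ 0 := gamma_ne hβ n
  have hfac : ((n.factorial : ℂ)) ≠ 0 := Nat.cast_ne_zero.mpr n.factorial_ne_zero
  have h4 : ((4:ℂ))^n ≠ 0 := pow_ne_zero _ (by norm_num)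
  have hn1 : ((n:ℂ) + 1) ≠ 0 := by
    intro h
    have := congrArg Complex.re h
    simp at this
    have : (0:ℝ) ≤ n := Nat.cast_nonneg n
    linarith
  unfold bc
  have harg : β + ((n+1 : ℕ) : ℂ) + 1 = (β + (n : ℂ) + 1) + 1 := by push_cast; ring
  rw [harg, Complex.Gamma_add_one _ hne, pow_succ, Nat.factorial_succ]
  push_cast
  field_simp

lemma radius_top (hβ : (-1 : ℝ) < β.re) :
    (FormalMultilinearSeries.ofScalars ℂ (bc β)).radius = ⊤ := by
  apply FormalMultilinearSeries.ofScalars_radius_eq_top_of_tendsto ℂ (bc β)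
    (Filter.Eventually.of_forall (bc_ne hβ))
  have heq : ∀ n : ℕ, ‖bc β (n+1)‖ / ‖bc β n‖
      = (‖(4 * ((n : ℂ) + 1) * (β + (n : ℂ) + 1))‖)⁻¹ := by
    intro n
    have ha : ‖bc β n‖ ≠ 0 := norm_ne_zero_iff.mpr (bc_ne hβ n)
    rw [bc_succ hβ n, norm_div]
    rw [div_right_comm, div_self ha, one_div]
  have hge : ∀ n : ℕ, (n : ℝ) ≤ ‖(4 * ((n : ℂ) + 1) * (β + (n : ℂ) + 1))‖ := by
    intro n
    have h1 : (1:ℝ) ≤ ‖(4 * ((n : ℂ) + 1))‖ := by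
      have h2 : ((4 * ((n : ℂ) + 1))).re = 4 * ((n : ℝ) + 1) := by simp
      have h3 : (0:ℝ) ≤ n := Nat.cast_nonneg n
      nlinarith [Complex.re_le_norm (4 * ((n : ℂ) + 1))]
    have h2 : (n : ℝ) ≤ ‖(β + (n : ℂ) + 1)‖ := by
      have := Complex.re_le_norm (β + (n : ℂ) + 1)
      simp only [Complex.add_re, Complex.natCast_re, Complex.one_re] at this
      linarith
    rw [norm_mul]
    calc (n:ℝ) = 1 * (n:ℝ) := (one_mul _).symm
    _ ≤ ‖(4 * ((n : ℂ) + 1))‖ * ‖(β + (n : ℂ) + 1)‖ :=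
        mul_le_mul h1 h2 (Nat.cast_nonneg n) (by positivity)
  have hatop : Tendsto (fun n : ℕ => ‖(4 * ((n : ℂ) + 1) * (β + (n : ℂ) + 1))‖)
      atTop atTop :=
    tendsto_atTop_mono hge tendsto_natCast_atTop_atTop
  have := hatop.inv_tendsto_atTop
  refine Tendsto.congr (fun n => ?_) this
  simp only [Pi.inv_apply]
  exact (heq n).symm

lemma hasF (hβ : (-1 : ℝ) < β.re) :
    HasFPowerSeriesOnBall (bF β) (FormalMultilinearSeries.ofScalars ℂ (bc β)) 0 ⊤ := by
  have h := FormalMultilinearSeries.hasFPowerSeriesOnBall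
    (FormalMultilinearSeries.ofScalars ℂ (bc β)) (by rw [radius_top hβ]; exact ENNReal.zero_lt_top)
  rw [radius_top hβ] at h
  exact h

lemma analyticAtF (hβ : (-1 : ℝ) < β.re) (t : ℂ) : AnalyticAt ℂ (bF β) t := by
  refine (hasF hβ).analyticAt_of_mem ?_
  simp [EMetric.mem_ball, edist_lt_top]

lemma diffF (hβ : (-1 : ℝ) < β.re) : Differentiable ℂ (bF β) :=
  fun t => (analyticAtF hβ t).differentiableAt

lemma contDerivF (hβ : (-1 : ℝ) < β.re) : ContinuousAt (deriv (bF β)) 0 := by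
  have h : AnalyticOnNhd ℂ (bF β) Set.univ := fun t _ => analyticAtF hβ t
  exact ((h.deriv) 0 (Set.mem_univ 0)).continuousAt

lemma bF_zero : bF β 0 = (Complex.Gamma (β + 1))⁻¹ := by
  rw [show bF β = FormalMultilinearSeries.ofScalarsSum (bc β) from rfl,
    FormalMultilinearSeries.ofScalarsSum_zero]
  simp [bc]

lemma besselI_eq (β ζ : ℂ) : besselI β ζ = (ζ / 2) ^ β * bF β (ζ ^ 2) := by
  unfold besselI
  congr 1
  rw [show bF β (ζ ^ 2) = FormalMultilinearSeries.ofScalarsSum (bc β) (ζ ^ 2) from rfl,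
    FormalMultilinearSeries.ofScalars_sum_eq]
  refine tsum_congr fun k => ?_
  rw [smul_eq_mul, ← pow_mul, bc, div_eq_mul_inv, mul_comm]

lemma mul_cpow_arg {x y : ℂ} (a : ℂ) (hx : x ≠ 0) (hy : y ≠ 0)
    (h : |x.arg + y.arg| < Real.pi) : (x * y) ^ a = x ^ a * y ^ a := by
  have hxy : x * y ≠ 0 := mul_ne_zero hx hy
  have hmem : x.arg + y.arg ∈ Set.Ioc (-Real.pi) Real.pi :=
    ⟨(abs_lt.mp h).1, (abs_lt.mp h).2.le⟩
  have harg : (x * y).arg = x.arg + y.arg := Complex.arg_mul hx hy hmem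
  have hlog : Complex.log (x * y) = Complex.log x + Complex.log y := by
    rw [Complex.log, Complex.log, Complex.log, norm_mul,
      Real.log_mul (norm_ne_zero_iff.mpr hx) (norm_ne_zero_iff.mpr hy), harg]
    push_cast
    ring
  rw [Complex.cpow_def_of_ne_zero hxy, Complex.cpow_def_of_ne_zero hx,
    Complex.cpow_def_of_ne_zero hy, ← Complex.exp_add, ← add_mul, hlog]

lemma tendsto_cpow0 {a : ℂ} (ha : 0 < a.re) :
    Tendsto (fun z : ℂ => z ^ a) (𝓝 0) (𝓝 0) := by
  have ha0 : a ≠ 0 := by intro h; rw [h] at ha; simp at ha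
  have h1 : ContinuousAt (fun x : ℂ × ℂ => x.1 ^ x.2) (0, a) :=
    Complex.continuousAt_cpow_zero_of_re_pos ha
  have h2 : Tendsto (fun z : ℂ => ((z, a) : ℂ × ℂ)) (𝓝 0) (𝓝 (0, a)) :=
    (continuous_id.prodMk continuous_const).tendsto 0
  have := h1.tendsto.comp h2
  simpa [Complex.zero_cpow ha0, Function.comp_def] using this

lemma isOpen_sector {θ : ℝ} (h0 : 0 < θ) (hθ : θ ≤ Real.pi / 2) : IsOpen (sector θ) := by
  have hπ := Real.pi_pos
  rw [sector, if_neg h0.ne']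
  rw [isOpen_iff_mem_nhds]
  intro z hz
  obtain ⟨hz0, hzarg⟩ := hz
  have hslit : z ∈ Complex.slitPlane := by
    refine Complex.mem_slitPlane_iff_arg.mpr ⟨?_, hz0⟩
    intro h
    rw [h, abs_of_pos hπ] at hzarg
    linarith
  have hc : ContinuousAt (fun w : ℂ => |Complex.arg w|) z :=
    (Complex.continuousAt_arg hslit).abs
  have h1 : ∀ᶠ w in 𝓝 z, |Complex.arg w| < θ :=
    hc.eventually_lt continuousAt_const hzarg
  have h2 : ∀ᶠ w in 𝓝 z, w ≠ (0 : ℂ) := eventually_ne_nhds hz0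
  filter_upwards [h1, h2] with w hw1 hw2
  exact ⟨hw2, hw1⟩

end Stmt8Aux

open Stmt8Aux in
theorem stmt8 (α : ℂ) (hα1 : 0 < α.re) (hα2 : α.re < 1)
    (ω : ℝ) (hω : ω ∈ Set.Ico 0 (Real.pi / 2))
    (l : ℂ) (hl : l ∈ sector ω) :
    DifferentiableOn ℂ (fun z => vFun α z l) (sector (Real.pi / 2 - ω)) ∧
    DifferentiableOn ℂ (fun z => wFun α z l) (sector (Real.pi / 2 - ω)) ∧
    Filter.Tendsto (fun z => vFun α z l)
      (nhdsWithin 0 (sector (Real.pi / 2 - ω))) (nhds 1) ∧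
    Filter.Tendsto (fun z : ℂ => -z ^ (1 - 2 * α) * deriv (fun w => vFun α w l) z)
      (nhdsWithin 0 (sector (Real.pi / 2 - ω))) (nhds 0) ∧
    Filter.Tendsto (fun z => wFun α z l)
      (nhdsWithin 0 (sector (Real.pi / 2 - ω))) (nhds 0) ∧
    Filter.Tendsto (fun z : ℂ => z ^ (1 - 2 * α) * deriv (fun w => wFun α w l) z)
      (nhdsWithin 0 (sector (Real.pi / 2 - ω))) (nhds 1) := by
  obtain ⟨hω0, hω2⟩ := hω
  have hπ := Real.pi_pos
  set θ := Real.pi / 2 - ω with hθdef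
  have hθpos : 0 < θ := sub_pos.mpr hω2
  have hθle : θ ≤ Real.pi / 2 := by rw [hθdef]; linarith
  have hsec : sector θ = {ζ : ℂ | ζ ≠ 0 ∧ |ζ.arg| < θ} := if_neg hθpos.ne'
  have hopen : IsOpen (sector θ) := Stmt8Aux.isOpen_sector hθpos hθle
  -- facts about l
  have hl' : l ≠ 0 ∧ |l.arg| ≤ ω := by
    by_cases h : ω = 0
    · rw [sector, if_pos h] at hl
      obtain ⟨h1, h2⟩ := hl
      have hne : l ≠ 0 := fun he => by rw [he] at h1; simp at h1
      refine ⟨hne, ?_⟩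
      rw [Complex.arg_eq_zero_iff.mpr ⟨h1.le, h2⟩, h]
      simp
    · rw [sector, if_neg h] at hl
      exact ⟨hl.1, hl.2.le⟩
  obtain ⟨hl0, hlarg⟩ := hl'
  have hlargπ : l.arg ≠ Real.pi := by
    intro h
    rw [h] at hlarg
    rw [abs_of_pos hπ] at hlarg
    linarith
  -- constants
  have hα0 : α ≠ 0 := fun h => by rw [h] at hα1; simp at hα1
  have hΓα : Complex.Gamma α ≠ 0 := Complex.Gamma_ne_zero_of_re_pos hα1
  have hre1α : 0 < (1 - α).re := by
    rw [Complex.sub_re, Complex.one_re]; linarith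
  have hΓ1α : Complex.Gamma (1 - α) ≠ 0 := Complex.Gamma_ne_zero_of_re_pos hre1α
  have h2 : (2:ℂ) ≠ 0 := by norm_num
  have harg2 : Complex.arg 2 = 0 := by
    rw [show ((2:ℂ)) = ((2:ℝ):ℂ) by norm_num]
    exact Complex.arg_ofReal_of_nonneg (by norm_num)
  have harg2inv : Complex.arg ((2:ℂ)⁻¹) = 0 := by
    rw [Complex.arg_inv, harg2, if_neg hπ.ne, neg_zero]
  have h2α : (2:ℂ)^α ≠ 0 := by
    rw [Complex.cpow_def_of_ne_zero h2]; exact Complex.exp_ne_zero _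
  have h21α : (2:ℂ)^(1-α) ≠ 0 := by
    rw [Complex.cpow_def_of_ne_zero h2]; exact Complex.exp_ne_zero _
  have hlα : l^α ≠ 0 := by
    rw [Complex.cpow_def_of_ne_zero hl0]; exact Complex.exp_ne_zero _
  have hβm : (-1:ℝ) < (-α).re := by rw [Complex.neg_re]; linarith
  have hβp : (-1:ℝ) < α.re := by linarith
  have h2sum : (2:ℂ)^(1-α) * (2:ℂ)^α = 2 := by
    rw [← Complex.cpow_add _ _ h2, sub_add_cancel, Complex.cpow_one]
  have h2pow : (2:ℂ)^(1-α) = 2 / (2:ℂ)^α := by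
    rw [eq_div_iff h2α]; exact h2sum
  -- membership helpers
  have hmem : ∀ z ∈ sector θ, z ≠ 0 ∧ |z.arg| < θ := fun z hz => by rwa [hsec] at hz
  have hargs : ∀ z ∈ sector θ, |l.arg| + |z.arg| < Real.pi / 2 := by
    intro z hz
    have h := (hmem z hz).2
    rw [hθdef] at h
    linarith
  have hslit : ∀ z ∈ sector θ, z ∈ Complex.slitPlane := by
    intro z hz
    obtain ⟨hz0, hzarg⟩ := hmem z hz
    refine Complex.mem_slitPlane_iff_arg.mpr ⟨fun h => ?_, hz0⟩
    rw [h, abs_of_pos hπ] at hzarg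
    have : Real.pi < Real.pi / 2 := lt_of_lt_of_le hzarg hθle
    linarith
  -- the identity for v
  have hv : ∀ z ∈ sector θ, vFun α z l = Complex.Gamma (1-α) * bF (-α) (l^2*z^2) := by
    intro z hz
    obtain ⟨hz0, hzarg⟩ := hmem z hz
    have hlz0 : l * z ≠ 0 := mul_ne_zero hl0 hz0
    have hsum : |l.arg + z.arg| < Real.pi / 2 :=
      lt_of_le_of_lt (abs_add_le _ _) (hargs z hz)
    have hsum' := abs_lt.mp hsum
    have harglz : (l*z).arg = l.arg + z.arg :=
      Complex.arg_mul hl0 hz0 ⟨by linarith, by linarith⟩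
    have hsplit : ((l*z)/2)^(-α) = (l*z)^(-α) * ((2:ℂ)⁻¹)^(-α) := by
      rw [div_eq_mul_inv]
      refine Stmt8Aux.mul_cpow_arg _ hlz0 (inv_ne_zero h2) ?_
      rw [harg2inv, add_zero, harglz]
      rw [abs_lt]; constructor <;> linarith
    have hcan : (l*z)^α * (l*z)^(-α) = 1 := by
      rw [← Complex.cpow_add _ _ hlz0, add_neg_cancel, Complex.cpow_zero]
    have hinv2 : ((2:ℂ)⁻¹)^(-α) = (2:ℂ)^α := by
      rw [Complex.inv_cpow _ _ (by rw [harg2]; exact hπ.ne), Complex.cpow_neg, inv_inv]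
    have hmain : (l*z)^α * besselI (-α) (l*z) = (2:ℂ)^α * bF (-α) (l^2*z^2) := by
      rw [Stmt8Aux.besselI_eq, mul_pow, hsplit, hinv2]
      calc (l*z)^α * ((l*z)^(-α) * (2:ℂ)^α * bF (-α) (l^2*z^2))
          = ((l*z)^α * (l*z)^(-α)) * ((2:ℂ)^α * bF (-α) (l^2*z^2)) := by ring
        _ = (2:ℂ)^α * bF (-α) (l^2*z^2) := by rw [hcan, one_mul]
    rw [vFun, hmain]
    field_simp
  -- the identity for w
  have hw : ∀ z ∈ sector θ, wFun α z l
      = (Complex.Gamma α / 2) * (z^(2*α) * bF α (l^2*z^2)) := by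
    intro z hz
    obtain ⟨hz0, hzarg⟩ := hmem z hz
    have hlz0 : l * z ≠ 0 := mul_ne_zero hl0 hz0
    have hsum : |l.arg + z.arg| < Real.pi / 2 :=
      lt_of_le_of_lt (abs_add_le _ _) (hargs z hz)
    have hsum' := abs_lt.mp hsum
    have harglz : (l*z).arg = l.arg + z.arg :=
      Complex.arg_mul hl0 hz0 ⟨by linarith, by linarith⟩
    have h1 : (l⁻¹ * z)^α = (l^α)⁻¹ * z^α := by
      rw [Stmt8Aux.mul_cpow_arg α (inv_ne_zero hl0) hz0 ?_,
        Complex.inv_cpow _ _ hlargπ]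
      calc |(l⁻¹).arg + z.arg| ≤ |(l⁻¹).arg| + |z.arg| := abs_add_le _ _
        _ = |l.arg| + |z.arg| := by rw [Complex.abs_arg_inv]
        _ < Real.pi / 2 := hargs z hz
        _ < Real.pi := by linarith
    have h2s : ((l*z)/2)^α = l^α * z^α * ((2:ℂ)^α)⁻¹ := by
      rw [div_eq_mul_inv,
        Stmt8Aux.mul_cpow_arg α hlz0 (inv_ne_zero h2)
          (by rw [harg2inv, add_zero, harglz, abs_lt]; constructor <;> linarith),
        Stmt8Aux.mul_cpow_arg α hl0 hz0 (by rw [abs_lt]; constructor <;> linarith),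
        Complex.inv_cpow _ _ (by rw [harg2]; exact hπ.ne)]
    have hz2 : z^α * z^α = z^(2*α) := by
      rw [← Complex.cpow_add _ _ hz0, two_mul]
    rw [wFun, Stmt8Aux.besselI_eq, mul_pow, h1, h2s, h2pow, ← hz2]
    field_simp
  -- limits of building blocks
  have hinner0 : Tendsto (fun z : ℂ => l^2*z^2) (𝓝 0) (𝓝 0) := by
    have hc : Continuous fun z : ℂ => l^2*z^2 := by fun_prop
    have := hc.tendsto 0
    simpa using this
  have hFt : ∀ β : ℂ, (-1:ℝ) < β.re →
      Tendsto (fun z : ℂ => bF β (l^2*z^2)) (𝓝 0) (𝓝 (bF β 0)) := by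
    intro β hβ
    exact Filter.Tendsto.comp (Stmt8Aux.analyticAtF hβ 0).continuousAt hinner0
  have hDt : ∀ β : ℂ, (-1:ℝ) < β.re →
      Tendsto (fun z : ℂ => deriv (bF β) (l^2*z^2)) (𝓝 0) (𝓝 (deriv (bF β) 0)) := by
    intro β hβ
    exact Filter.Tendsto.comp (Stmt8Aux.contDerivF hβ) hinner0
  have hinnerD : ∀ z : ℂ, HasDerivAt (fun w : ℂ => l^2*w^2) (l^2*(2*z)) z := by
    intro z
    have := (hasDerivAt_pow 2 z).const_mul (l^2)
    simpa using this
  have hFcomp : ∀ (β : ℂ), (-1:ℝ) < β.re → ∀ z : ℂ,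
      HasDerivAt (fun w : ℂ => bF β (l^2*w^2))
        (deriv (bF β) (l^2*z^2) * (l^2*(2*z))) z := by
    intro β hβ z
    exact HasDerivAt.comp z (Stmt8Aux.diffF hβ (l^2*z^2)).hasDerivAt (hinnerD z)
  -- Part 1: v differentiable
  have part1 : DifferentiableOn ℂ (fun z => vFun α z l) (sector θ) := by
    have hpoly : Differentiable ℂ (fun z : ℂ => l^2*z^2) := by fun_prop
    have hgd : Differentiable ℂ (fun z : ℂ => Complex.Gamma (1-α) * bF (-α) (l^2*z^2)) :=
      ((Stmt8Aux.diffF hβm).comp hpoly).const_mul _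
    exact hgd.differentiableOn.congr hv
  -- Part 2: w differentiable
  have part2 : DifferentiableOn ℂ (fun z => wFun α z l) (sector θ) := by
    have hpoly : Differentiable ℂ (fun z : ℂ => l^2*z^2) := by fun_prop
    have hgd : DifferentiableOn ℂ
        (fun z : ℂ => (Complex.Gamma α / 2) * (z^(2*α) * bF α (l^2*z^2))) (sector θ) := by
      intro z hz
      have hcp : DifferentiableAt ℂ (fun w : ℂ => w^(2*α)) z :=
        (Complex.hasStrictDerivAt_cpow_const (hslit z hz)).hasDerivAt.differentiableAt
      have hFa : DifferentiableAt ℂ (fun w : ℂ => bF α (l^2*w^2)) z :=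
        ((Stmt8Aux.diffF hβp).comp hpoly) z
      exact (((hcp.mul hFa)).const_mul _).differentiableWithinAt
    exact hgd.congr hw
  -- Part 3: v → 1
  have part3 : Tendsto (fun z => vFun α z l) (𝓝[sector θ] 0) (𝓝 1) := by
    have hval : Complex.Gamma (1-α) * bF (-α) 0 = 1 := by
      rw [Stmt8Aux.bF_zero, show (-α + 1 : ℂ) = 1 - α by ring]
      exact mul_inv_cancel₀ hΓ1α
    have hnice : Tendsto (fun z : ℂ => Complex.Gamma (1-α) * bF (-α) (l^2*z^2))
        (𝓝 0) (𝓝 1) := by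
      have := (hFt (-α) hβm).const_mul (Complex.Gamma (1-α))
      rwa [hval] at this
    refine Tendsto.congr' ?_ (hnice.mono_left nhdsWithin_le_nhds)
    exact eventually_of_mem self_mem_nhdsWithin fun z hz => (hv z hz).symm
  -- Part 5: w → 0
  have part5 : Tendsto (fun z => wFun α z l) (𝓝[sector θ] 0) (𝓝 0) := by
    have h2re : 0 < ((2*α : ℂ)).re := by
      have : ((2*α : ℂ)).re = 2*α.re := by simp [Complex.mul_re]
      rw [this]; linarith
    have hnice : Tendsto (fun z : ℂ => (Complex.Gamma α / 2) * (z^(2*α) * bF α (l^2*z^2)))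
        (𝓝 0) (𝓝 0) := by
      have := ((Stmt8Aux.tendsto_cpow0 h2re).mul (hFt α hβp)).const_mul
        (Complex.Gamma α / 2)
      simpa using this
    refine Tendsto.congr' ?_ (hnice.mono_left nhdsWithin_le_nhds)
    exact eventually_of_mem self_mem_nhdsWithin fun z hz => (hw z hz).symm
  -- Part 4: -z^(1-2α) v' → 0
  have part4 : Tendsto (fun z : ℂ => -z ^ (1 - 2 * α) * deriv (fun w => vFun α w l) z)
      (𝓝[sector θ] 0) (𝓝 0) := by
    have hvderiv : ∀ z ∈ sector θ, deriv (fun w => vFun α w l) z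
        = Complex.Gamma (1-α) * (deriv (bF (-α)) (l^2*z^2) * (l^2*(2*z))) := by
      intro z hz
      have hev : (fun w => vFun α w l) =ᶠ[𝓝 z]
          (fun w => Complex.Gamma (1-α) * bF (-α) (l^2*w^2)) :=
        eventually_of_mem (hopen.mem_nhds hz) (fun w hw => hv w hw)
      rw [hev.deriv_eq]
      exact ((hFcomp (-α) hβm z).const_mul (Complex.Gamma (1-α))).deriv
    have h22re : 0 < ((2 - 2*α : ℂ)).re := by
      have : ((2 - 2*α : ℂ)).re = 2 - 2*α.re := by simp [Complex.sub_re, Complex.mul_re]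
      rw [this]; linarith
    have hnice : Tendsto (fun z : ℂ =>
        (-(Complex.Gamma (1-α) * (2*l^2))) * (z^(2-2*α) * deriv (bF (-α)) (l^2*z^2)))
        (𝓝 0) (𝓝 0) := by
      have := ((Stmt8Aux.tendsto_cpow0 h22re).mul (hDt (-α) hβm)).const_mul
        (-(Complex.Gamma (1-α) * (2*l^2)))
      simpa using this
    refine Tendsto.congr' ?_ (hnice.mono_left nhdsWithin_le_nhds)
    refine eventually_of_mem self_mem_nhdsWithin fun z hz => ?_
    obtain ⟨hz0, _⟩ := hmem z hz
    dsimp only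
    rw [hvderiv z hz, show (2:ℂ) - 2*α = (1-2*α)+1 by ring,
      Complex.cpow_add _ _ hz0, Complex.cpow_one]
    ring
  -- Part 6: z^(1-2α) w' → 1
  have part6 : Tendsto (fun z : ℂ => z ^ (1 - 2 * α) * deriv (fun w => wFun α w l) z)
      (𝓝[sector θ] 0) (𝓝 1) := by
    have hwderiv : ∀ z ∈ sector θ, deriv (fun w => wFun α w l) z
        = (Complex.Gamma α / 2) * ((2*α) * z^(2*α-1) * bF α (l^2*z^2)
          + z^(2*α) * (deriv (bF α) (l^2*z^2) * (l^2*(2*z)))) := by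
      intro z hz
      have hev : (fun w => wFun α w l) =ᶠ[𝓝 z]
          (fun w => (Complex.Gamma α / 2) * (w^(2*α) * bF α (l^2*w^2))) :=
        eventually_of_mem (hopen.mem_nhds hz) (fun w hww => hw w hww)
      rw [hev.deriv_eq]
      have hcpow : HasDerivAt (fun w : ℂ => w^(2*α)) (2*α * z^(2*α-1)) z :=
        (Complex.hasStrictDerivAt_cpow_const (hslit z hz)).hasDerivAt
      have hmul := hcpow.mul (hFcomp α hβp z)
      have hde := (hmul.const_mul (Complex.Gamma α / 2)).deriv
      exact hde
    have hval6 : (Complex.Gamma α / 2) * ((2*α) * bF α 0) = 1 := by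
      rw [Stmt8Aux.bF_zero, Complex.Gamma_add_one α hα0]
      field_simp
    have t1 : Tendsto (fun z : ℂ => (Complex.Gamma α / 2) * ((2*α) * bF α (l^2*z^2)))
        (𝓝 0) (𝓝 1) := by
      have := ((hFt α hβp).const_mul (2*α)).const_mul (Complex.Gamma α / 2)
      rwa [hval6] at this
    have t2 : Tendsto (fun z : ℂ =>
        (Complex.Gamma α * l^2) * ((z*z) * deriv (bF α) (l^2*z^2))) (𝓝 0) (𝓝 0) := by
      have hzz : Tendsto (fun z : ℂ => z*z) (𝓝 0) (𝓝 0) := by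
        have := (continuous_id.mul continuous_id).tendsto (0:ℂ)
        simpa [Pi.mul_def] using this
      have := (hzz.mul (hDt α hβp)).const_mul (Complex.Gamma α * l^2)
      simpa using this
    have hnice : Tendsto (fun z : ℂ =>
        (Complex.Gamma α / 2) * ((2*α) * bF α (l^2*z^2))
          + (Complex.Gamma α * l^2) * ((z*z) * deriv (bF α) (l^2*z^2))) (𝓝 0) (𝓝 1) := by
      have := t1.add t2
      simpa using this
    refine Tendsto.congr' ?_ (hnice.mono_left nhdsWithin_le_nhds)
    refine eventually_of_mem self_mem_nhdsWithin fun z hz => ?_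
    obtain ⟨hz0, _⟩ := hmem z hz
    dsimp only
    rw [hwderiv z hz]
    have e1 : z^((1:ℂ)-2*α) * z^(2*α-1) = 1 := by
      rw [← Complex.cpow_add _ _ hz0, show (1-2*α)+(2*α-1) = (0:ℂ) by ring,
        Complex.cpow_zero]
    have e2 : z^((1:ℂ)-2*α) * z^(2*α) = z := by
      rw [← Complex.cpow_add _ _ hz0, show (1-2*α)+(2*α) = (1:ℂ) by ring,
        Complex.cpow_one]
    linear_combination (-(Complex.Gamma α * α * bF α (l^2*z^2))) * e1
      + (-(Complex.Gamma α * l^2 * z * deriv (bF α) (l^2*z^2))) * e2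
  exact ⟨part1, part2, part3, part4, part5, part6⟩
end

section
/- Let X be a complex Banach space, A : X → X a bounded linear operator, α ∈ ℂ with 0 < Re α < 1, x, y ∈ X, and let u ∈ C([0,∞); X) ∩ C²((0,∞); X) satisfy u''(t) + ((1−2α)/t) u'(t) = A u(t) for all t > 0, u(0) = x, and t^{1−2α} u'(t) → y as t → 0+. Then for every t > 0 one has the integral equation u(t) = x + (t^{2α}/(2α)) y + (2α)^{−1} ∫_0^t (t^{2α} − s^{2α}) s^{1−2α} A u(s) ds, where the integral is a convergent Bochner integral and complex powers of positive reals are principal-branch. -/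
open Complex Filter Set MeasureTheory

private lemma cpow_contAt {c : ℂ} {s : ℝ} (hs : 0 < s) :
    ContinuousAt (fun r : ℝ => (r : ℂ) ^ c) s :=
  (continuousAt_cpow_const (Complex.ofReal_mem_slitPlane.2 hs)).comp
    Complex.continuous_ofReal.continuousAt

private lemma cpow_hasDerivAt {c : ℂ} {s : ℝ} (hs : 0 < s) :
    HasDerivAt (fun r : ℝ => (r : ℂ) ^ c) (c * (s : ℂ) ^ (c - 1)) s :=
  (Complex.hasStrictDerivAt_cpow_const (Complex.ofReal_mem_slitPlane.2 hs)).hasDerivAt.comp_ofReal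

private lemma cpow_norm {c : ℂ} {s : ℝ} (hs : 0 < s) : ‖(s : ℂ) ^ c‖ = s ^ c.re := by
  rw [Complex.norm_cpow_eq_rpow_re_of_pos hs]

private lemma integrableOn_helper {X : Type*} [NormedAddCommGroup X]
    {f : ℝ → X} {t C p : ℝ} (ht : 0 < t) (hp : -1 < p)
    (hf : ContinuousOn f (Set.Ioc 0 t))
    (hbound : ∀ s ∈ Set.Ioc (0:ℝ) t, ‖f s‖ ≤ C * s ^ p) :
    MeasureTheory.IntegrableOn f (Set.Ioc 0 t) := by
  have hg : MeasureTheory.IntegrableOn (fun s : ℝ => C * s ^ p) (Set.Ioc 0 t) := by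
    have := (intervalIntegral.intervalIntegrable_rpow' (a := 0) (b := t) hp).const_mul C
    rwa [intervalIntegrable_iff_integrableOn_Ioc_of_le ht.le] at this
  exact MeasureTheory.Integrable.mono' hg (hf.aestronglyMeasurable measurableSet_Ioc)
    ((MeasureTheory.ae_restrict_iff' measurableSet_Ioc).2 (Filter.Eventually.of_forall hbound))

theorem stmt13 {X : Type*} [NormedAddCommGroup X] [NormedSpace ℂ X] [CompleteSpace X]
    (A : X →L[ℂ] X) (α : ℂ) (hα1 : 0 < α.re) (hα2 : α.re < 1)
    (x y : X) (u u' u'' : ℝ → X)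
    (hu_cont : ContinuousOn u (Set.Ici 0))
    (hu' : ∀ t ∈ Set.Ioi (0 : ℝ), HasDerivAt u (u' t) t)
    (hu'' : ∀ t ∈ Set.Ioi (0 : ℝ), HasDerivAt u' (u'' t) t)
    (hu''_cont : ContinuousOn u'' (Set.Ioi 0))
    (hODE : ∀ t ∈ Set.Ioi (0 : ℝ), u'' t + ((1 - 2 * α) / (t : ℂ)) • u' t = A (u t))
    (hx : u 0 = x)
    (hy : Filter.Tendsto (fun t : ℝ => ((t : ℂ) ^ (1 - 2 * α)) • u' t)
      (nhdsWithin 0 (Set.Ioi 0)) (nhds y)) :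
    ∀ t ∈ Set.Ioi (0 : ℝ),
      MeasureTheory.IntegrableOn
        (fun s : ℝ => (((t : ℂ) ^ (2 * α) - (s : ℂ) ^ (2 * α)) * (s : ℂ) ^ (1 - 2 * α)) • A (u s))
        (Set.Ioc 0 t) ∧
      u t = x + ((t : ℂ) ^ (2 * α) / (2 * α)) • y +
        ((2 * α)⁻¹ : ℂ) • ∫ s in Set.Ioc (0 : ℝ) t,
          (((t : ℂ) ^ (2 * α) - (s : ℂ) ^ (2 * α)) * (s : ℂ) ^ (1 - 2 * α)) • A (u s) := by
  -- basic scalar facts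
  have hβre : 0 < (2 * α).re := by
    have : (2 * α).re = 2 * α.re := by simp [Complex.mul_re]
    rw [this]; linarith
  have hβ0 : (2 * α) ≠ 0 := by
    intro h; rw [h] at hβre; simp at hβre
  have h1βre : (1 - 2 * α).re = 1 - (2 * α).re := by simp [Complex.sub_re]
  have hβre2 : (2 * α).re < 2 := by
    have : (2 * α).re = 2 * α.re := by simp [Complex.mul_re]
    rw [this]; linarith
  have hp1 : (-1 : ℝ) < (1 - 2 * α).re := by rw [h1βre]; linarith
  -- continuity of A ∘ u
  have hAuAt : ∀ s ∈ Set.Ioi (0:ℝ), ContinuousAt (fun r : ℝ => A (u r)) s := fun s hs =>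
    A.continuous.continuousAt.comp (hu' s hs).continuousAt
  have hbound : ∀ T : ℝ, ∃ C : ℝ, ∀ s ∈ Set.Icc (0:ℝ) T, ‖A (u s)‖ ≤ C := fun T =>
    isCompact_Icc.exists_bound_of_continuousOn
      ((A.continuous.comp_continuousOn hu_cont).mono (fun s hs => hs.1))
  -- the two auxiliary integrands
  set f₁ : ℝ → X := fun s => ((s:ℂ) ^ (1 - 2 * α)) • A (u s) with hf₁def
  set f₂ : ℝ → X := fun s => ((s:ℂ) ^ (2 * α) * (s:ℂ) ^ (1 - 2 * α)) • A (u s) with hf₂def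
  have hf₁At : ∀ s ∈ Set.Ioi (0:ℝ), ContinuousAt f₁ s := fun s hs =>
    (cpow_contAt hs).smul (hAuAt s hs)
  have hf₂At : ∀ s ∈ Set.Ioi (0:ℝ), ContinuousAt f₂ s := fun s hs =>
    ((cpow_contAt hs).mul (cpow_contAt hs)).smul (hAuAt s hs)
  have hf₁cont : ContinuousOn f₁ (Set.Ioi 0) := fun s hs => (hf₁At s hs).continuousWithinAt
  have hf₂cont : ContinuousOn f₂ (Set.Ioi 0) := fun s hs => (hf₂At s hs).continuousWithinAt
  have hint₁ : ∀ T : ℝ, 0 < T → IntegrableOn f₁ (Set.Ioc 0 T) := by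
    intro T hT
    obtain ⟨C, hC⟩ := hbound T
    refine integrableOn_helper (C := C) hT hp1 (hf₁cont.mono Ioc_subset_Ioi_self) (fun s hs => ?_)
    rw [hf₁def]
    have hs0 : 0 < s := hs.1
    rw [norm_smul, cpow_norm hs0, mul_comm]
    exact mul_le_mul_of_nonneg_right (hC s ⟨hs0.le, hs.2⟩) (Real.rpow_nonneg hs0.le _)
  have hint₂ : ∀ T : ℝ, 0 < T → IntegrableOn f₂ (Set.Ioc 0 T) := by
    intro T hT
    obtain ⟨C, hC⟩ := hbound T
    refine integrableOn_helper (C := T ^ (2*α).re * C) hT hp1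
      (hf₂cont.mono Ioc_subset_Ioi_self) (fun s hs => ?_)
    rw [hf₂def]
    have hs0 : 0 < s := hs.1
    rw [norm_smul, norm_mul, cpow_norm hs0, cpow_norm hs0]
    have h1 : s ^ (2*α).re ≤ T ^ (2*α).re :=
      Real.rpow_le_rpow hs0.le hs.2 hβre.le
    have h2 : ‖A (u s)‖ ≤ C := hC s ⟨hs0.le, hs.2⟩
    have h3 : (0:ℝ) ≤ s ^ (1 - 2*α).re := Real.rpow_nonneg hs0.le _
    calc s ^ (2*α).re * s ^ (1 - 2*α).re * ‖A (u s)‖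
        ≤ T ^ (2*α).re * s ^ (1 - 2*α).re * C := by
          apply mul_le_mul (mul_le_mul_of_nonneg_right h1 h3) h2 (norm_nonneg _)
          positivity
      _ = T ^ (2*α).re * C * s ^ (1 - 2*α).re := by ring
  have hII₁ : ∀ T : ℝ, 0 < T → IntervalIntegrable f₁ volume 0 T := fun T hT =>
    (intervalIntegrable_iff_integrableOn_Ioc_of_le hT.le).2 (hint₁ T hT)
  have hII₂ : ∀ T : ℝ, 0 < T → IntervalIntegrable f₂ volume 0 T := fun T hT =>
    (intervalIntegrable_iff_integrableOn_Ioc_of_le hT.le).2 (hint₂ T hT)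
  -- primitives
  set I₁ : ℝ → X := fun r => ∫ s in (0:ℝ)..r, f₁ s with hI₁def
  set I₂ : ℝ → X := fun r => ∫ s in (0:ℝ)..r, f₂ s with hI₂def
  have hI₁deriv : ∀ s ∈ Set.Ioi (0:ℝ), HasDerivAt I₁ (f₁ s) s := fun s hs =>
    intervalIntegral.integral_hasDerivAt_right (hII₁ s hs)
      (hf₁cont.stronglyMeasurableAtFilter isOpen_Ioi s hs) (hf₁At s hs)
  have hI₂deriv : ∀ s ∈ Set.Ioi (0:ℝ), HasDerivAt I₂ (f₂ s) s := fun s hs =>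
    intervalIntegral.integral_hasDerivAt_right (hII₂ s hs)
      (hf₂cont.stronglyMeasurableAtFilter isOpen_Ioi s hs) (hf₂At s hs)
  -- limits of primitives at 0⁺
  have hprim0 : ∀ (f : ℝ → X), IntegrableOn f (Set.Ioc 0 1) →
      Tendsto (fun r => ∫ s in (0:ℝ)..r, f s) (nhdsWithin 0 (Set.Ioi 0)) (nhds 0) := by
    intro f hf
    have hcont : ContinuousOn (fun r => ∫ s in (0:ℝ)..r, f s) (Set.uIcc 0 1) :=
      intervalIntegral.continuousOn_primitive_interval
        (by rwa [Set.uIcc_of_le zero_le_one, integrableOn_Icc_iff_integrableOn_Ioc])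
    have h0 : (0:ℝ) ∈ Set.uIcc 0 1 := Set.left_mem_uIcc
    have := (hcont 0 h0).tendsto
    rw [intervalIntegral.integral_same] at this
    refine this.mono_left (nhdsWithin_le_of_mem ?_)
    refine mem_of_superset (Ioc_mem_nhdsGT_of_mem ⟨le_refl 0, one_pos⟩) ?_
    rw [Set.uIcc_of_le zero_le_one]
    exact Set.Ioc_subset_Icc_self.trans (le_refl _)
  have hI₁0 : Tendsto I₁ (nhdsWithin 0 (Set.Ioi 0)) (nhds 0) := hprim0 f₁ (hint₁ 1 one_pos)
  have hI₂0 : Tendsto I₂ (nhdsWithin 0 (Set.Ioi 0)) (nhds 0) := hprim0 f₂ (hint₂ 1 one_pos)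
  -- cpow tends to 0 at 0⁺
  have hcp0 : Tendsto (fun r : ℝ => (r:ℂ) ^ (2 * α)) (nhdsWithin 0 (Set.Ioi 0)) (nhds 0) := by
    refine squeeze_zero_norm' (a := fun r : ℝ => r ^ (2*α).re) ?_ ?_
    · filter_upwards [self_mem_nhdsWithin] with r hr
      exact le_of_eq (cpow_norm hr)
    · have : ContinuousAt (fun r : ℝ => r ^ (2*α).re) 0 :=
        Real.continuousAt_rpow_const 0 _ (Or.inr hβre.le)
      have h0 : (0:ℝ) ^ (2*α).re = 0 := Real.zero_rpow hβre.ne'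
      have := this.tendsto
      rw [h0] at this
      exact this.mono_left nhdsWithin_le_nhds
  -- Step 2: the first-order equation
  have hveq : ∀ s ∈ Set.Ioi (0:ℝ), ((s:ℂ) ^ (1 - 2 * α)) • u' s = y + I₁ s := by
    set w : ℝ → X := fun r => ((r:ℂ) ^ (1 - 2 * α)) • u' r - I₁ r with hwdef
    have hwderiv : ∀ s ∈ Set.Ioi (0:ℝ), HasDerivAt w 0 s := by
      intro s hs
      have hs' : (0:ℝ) < s := hs
      have hs0 : (s:ℂ) ≠ 0 := by exact_mod_cast hs'.ne'
      have h1 : HasDerivAt (fun r : ℝ => ((r:ℂ) ^ (1 - 2 * α)) • u' r)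
          (((s:ℂ) ^ (1 - 2 * α)) • u'' s + ((1 - 2 * α) * (s:ℂ) ^ (1 - 2 * α - 1)) • u' s) s :=
        HasDerivAt.smul (cpow_hasDerivAt hs') (hu'' s hs)
      have h2 := (h1.sub (hI₁deriv s hs))
      convert h2 using 1
      · rfl
      have hkey : (1 - 2 * α) * (s:ℂ) ^ (1 - 2 * α - 1)
          = (s:ℂ) ^ (1 - 2 * α) * ((1 - 2 * α) / (s:ℂ)) := by
        rw [Complex.cpow_sub _ _ hs0, Complex.cpow_one]
        ring
      rw [hkey, hf₁def, mul_smul]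
      have : ((s:ℂ) ^ (1 - 2 * α)) • u'' s +
            ((s:ℂ) ^ (1 - 2 * α)) • (((1 - 2*α) / (s:ℂ)) • u' s) -
            ((s:ℂ) ^ (1 - 2 * α)) • A (u s)
          = ((s:ℂ) ^ (1 - 2 * α)) • (u'' s + ((1 - 2*α) / (s:ℂ)) • u' s - A (u s)) := by
        rw [smul_sub, smul_add]
      rw [this, hODE s hs, sub_self, smul_zero]
    have hwconst : ∀ a b : ℝ, 0 < a → a ≤ b → w b = w a := by
      intro a b ha hab
      have := constant_of_has_deriv_right_zero (f := w) (a := a) (b := b)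
        (fun r hr => ((hwderiv r (lt_of_lt_of_le ha hr.1)).continuousAt).continuousWithinAt)
        (fun r hr => ((hwderiv r (lt_of_lt_of_le ha hr.1)).hasDerivWithinAt))
      exact this b (Set.right_mem_Icc.2 hab)
    have hwlim : Tendsto w (nhdsWithin 0 (Set.Ioi 0)) (nhds y) := by
      have := hy.sub hI₁0
      simpa using this
    intro s hs
    have hs' : (0:ℝ) < s := hs
    have hwconst' : Tendsto w (nhdsWithin 0 (Set.Ioi 0)) (nhds (w s)) := by
      refine Tendsto.congr' ?_ tendsto_const_nhds
      filter_upwards [Ioc_mem_nhdsGT_of_mem ⟨le_refl 0, hs'⟩] with r hr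
      exact hwconst r s hr.1 hr.2
    have : w s = y := tendsto_nhds_unique hwconst' hwlim
    rw [hwdef] at this
    simpa [sub_eq_iff_eq_add] using this
  -- Step 3: candidate function g and its derivative
  set g : ℝ → X := fun r =>
    x + ((2 * α)⁻¹ : ℂ) • (((r:ℂ) ^ (2 * α)) • y + ((r:ℂ) ^ (2 * α)) • I₁ r - I₂ r) with hgdef
  have hgderiv : ∀ s ∈ Set.Ioi (0:ℝ), HasDerivAt g (u' s) s := by
    intro s hs
    have hs' : (0:ℝ) < s := hs
    have hs0 : (s:ℂ) ≠ 0 := by exact_mod_cast hs'.ne'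
    have hcp := cpow_hasDerivAt (c := 2 * α) hs'
    have h1 : HasDerivAt (fun r : ℝ => ((r:ℂ) ^ (2*α)) • y)
        ((2 * α * (s:ℂ) ^ (2*α - 1)) • y) s := hcp.smul_const y
    have h2 : HasDerivAt (fun r : ℝ => ((r:ℂ) ^ (2*α)) • I₁ r)
        (((s:ℂ) ^ (2*α)) • f₁ s + (2 * α * (s:ℂ) ^ (2*α - 1)) • I₁ s) s :=
      hcp.smul (hI₁deriv s hs)
    have h4 := ((h1.add h2).sub (hI₂deriv s hs)).const_smul ((2 * α)⁻¹ : ℂ)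
    have h5 := (hasDerivAt_const s x).add h4
    convert h5 using 1
    · rfl
    rw [zero_add]
    have e1 : ((s:ℂ) ^ (2*α)) • f₁ s = f₂ s := by
      rw [hf₁def, hf₂def, smul_smul]
    rw [e1]
    have e2 : (2 * α * (s:ℂ) ^ (2*α - 1)) • y + (f₂ s + (2 * α * (s:ℂ) ^ (2*α - 1)) • I₁ s)
        - f₂ s = (2 * α * (s:ℂ) ^ (2*α - 1)) • (y + I₁ s) := by
      rw [smul_add]; abel
    rw [e2, smul_smul, ← mul_assoc, inv_mul_cancel₀ hβ0, one_mul, ← hveq s hs, smul_smul,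
      ← Complex.cpow_add _ _ hs0]
    have : (2*α - 1) + (1 - 2*α) = 0 := by ring
    rw [this, Complex.cpow_zero, one_smul]
  -- Step 4: u = g on Ioi 0
  have hug : ∀ s ∈ Set.Ioi (0:ℝ), u s = g s := by
    have hdiff : ∀ s ∈ Set.Ioi (0:ℝ), HasDerivAt (fun r => u r - g r) 0 s := fun s hs => by
      have := (hu' s hs).sub (hgderiv s hs); rw [sub_self] at this; exact this
    have hconst : ∀ a b : ℝ, 0 < a → a ≤ b → u b - g b = u a - g a := by
      intro a b ha hab
      have := constant_of_has_deriv_right_zero (f := fun r => u r - g r) (a := a) (b := b)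
        (fun r hr => ((hdiff r (lt_of_lt_of_le ha hr.1)).continuousAt).continuousWithinAt)
        (fun r hr => ((hdiff r (lt_of_lt_of_le ha hr.1)).hasDerivWithinAt))
      exact this b (Set.right_mem_Icc.2 hab)
    have hg0 : Tendsto g (nhdsWithin 0 (Set.Ioi 0)) (nhds x) := by
      have hterm : Tendsto (fun r : ℝ => ((r:ℂ) ^ (2*α)) • y + ((r:ℂ) ^ (2*α)) • I₁ r - I₂ r)
          (nhdsWithin 0 (Set.Ioi 0)) (nhds 0) := by
        have t1 : Tendsto (fun r : ℝ => ((r:ℂ) ^ (2*α)) • y)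
            (nhdsWithin 0 (Set.Ioi 0)) (nhds 0) := by
          simpa using hcp0.smul (tendsto_const_nhds : Tendsto (fun _ : ℝ => y) (nhdsWithin 0 (Set.Ioi 0)) (nhds y))
        have t2 : Tendsto (fun r : ℝ => ((r:ℂ) ^ (2*α)) • I₁ r)
            (nhdsWithin 0 (Set.Ioi 0)) (nhds 0) := by
          simpa using hcp0.smul hI₁0
        simpa using (t1.add t2).sub hI₂0
      have := (tendsto_const_nhds : Tendsto (fun _ : ℝ => x) (nhdsWithin 0 (Set.Ioi 0)) (nhds x)).add
        (hterm.const_smul ((2 * α)⁻¹ : ℂ))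
      simpa [hgdef] using this
    have hu0 : Tendsto u (nhdsWithin 0 (Set.Ioi 0)) (nhds x) := by
      have := (hu_cont 0 Set.self_mem_Ici).tendsto
      rw [hx] at this
      exact this.mono_left (nhdsWithin_mono 0 Set.Ioi_subset_Ici_self)
    have hlim : Tendsto (fun r => u r - g r) (nhdsWithin 0 (Set.Ioi 0)) (nhds 0) := by
      simpa using hu0.sub hg0
    intro s hs
    have hs' : (0:ℝ) < s := hs
    have hconst' : Tendsto (fun r => u r - g r) (nhdsWithin 0 (Set.Ioi 0))
        (nhds (u s - g s)) := by
      refine Tendsto.congr' ?_ tendsto_const_nhds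
      filter_upwards [Ioc_mem_nhdsGT_of_mem ⟨le_refl 0, hs'⟩] with r hr
      exact hconst r s hr.1 hr.2
    have := tendsto_nhds_unique hconst' hlim
    exact sub_eq_zero.mp this
  -- Step 5: assembly
  intro t ht
  have ht' : (0:ℝ) < t := ht
  have hfeq : (fun s : ℝ =>
      (((t : ℂ) ^ (2 * α) - (s : ℂ) ^ (2 * α)) * (s : ℂ) ^ (1 - 2 * α)) • A (u s))
      = fun s : ℝ => ((t:ℂ) ^ (2 * α)) • f₁ s - f₂ s := by
    funext s
    rw [hf₁def, hf₂def, smul_smul, sub_mul, sub_smul]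
  have hmain_int : IntegrableOn
      (fun s : ℝ => (((t : ℂ) ^ (2 * α) - (s : ℂ) ^ (2 * α)) * (s : ℂ) ^ (1 - 2 * α)) • A (u s))
      (Set.Ioc 0 t) := by
    rw [hfeq]
    exact ((hint₁ t ht').smul ((t:ℂ) ^ (2*α))).sub (hint₂ t ht')
  refine ⟨hmain_int, ?_⟩
  have hIeq : (∫ s in Set.Ioc (0:ℝ) t,
      (((t : ℂ) ^ (2 * α) - (s : ℂ) ^ (2 * α)) * (s : ℂ) ^ (1 - 2 * α)) • A (u s))
      = ((t:ℂ) ^ (2 * α)) • I₁ t - I₂ t := by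
    have hintc : IntegrableOn (fun s : ℝ => ((t:ℂ) ^ (2*α)) • f₁ s) (Set.Ioc 0 t) := by
      exact (hint₁ t ht').smul ((t:ℂ) ^ (2*α))
    rw [hfeq, integral_sub hintc (hint₂ t ht'), integral_smul,
      ← intervalIntegral.integral_of_le ht'.le, ← intervalIntegral.integral_of_le ht'.le]
  rw [hIeq, hug t ht]
  simp only [hgdef]
  have : ((t:ℂ) ^ (2 * α)) • y + ((t:ℂ) ^ (2 * α)) • I₁ t - I₂ t
      = ((t:ℂ) ^ (2 * α)) • y + (((t:ℂ) ^ (2 * α)) • I₁ t - I₂ t) := by abel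
  rw [this, smul_add, ← add_assoc, smul_smul, div_eq_inv_mul, mul_comm]
end

section
/- Let X be a complex Banach space, A : X → X a bounded linear operator, and α ∈ ℂ with 0 < Re α < 1. Then for any x, y ∈ X there is at most one function u ∈ C([0,∞); X) ∩ C²((0,∞); X) with u''(t) + ((1−2α)/t) u'(t) = A u(t) for all t > 0, u(0) = x, and t^{1−2α} u'(t) → y as t → 0+. Equivalently, if such a u satisfies x = 0 and y = 0, then u = 0. -/
open Complex Filter Set MeasureTheory intervalIntegral

private lemma gronwall15 (φ ψ gg dψ : ℝ → ℝ) (T : ℝ) (hT : 0 < T)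
    (hφcont : ContinuousOn φ (Set.Icc 0 T))
    (hφ0 : φ 0 = 0)
    (hφpos : ∀ s ∈ Set.Icc (0:ℝ) T, 0 ≤ φ s)
    (hφd : ∀ s ∈ Set.Ioo (0:ℝ) T, HasDerivAt φ (gg s) s)
    (hψc : Continuous ψ)
    (hψd : ∀ s ∈ Set.Ioo (0:ℝ) T, HasDerivAt ψ (dψ s) s)
    (hb : ∀ s ∈ Set.Ioo (0:ℝ) T, gg s ≤ dψ s * φ s) :
    φ T = 0 := by
  have hhder : ∀ s ∈ Set.Ioo (0:ℝ) T, HasDerivAt (fun r => φ r * Real.exp (-ψ r))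
      (gg s * Real.exp (-ψ s) + φ s * (Real.exp (-ψ s) * -(dψ s))) s :=
    fun s hs => (hφd s hs).mul ((hψd s hs).neg.exp)
  have hanti : AntitoneOn (fun r => φ r * Real.exp (-ψ r)) (Set.Icc 0 T) := by
    refine antitoneOn_of_deriv_nonpos (convex_Icc 0 T) ?_ ?_ ?_
    · exact hφcont.mul (Real.continuous_exp.comp hψc.neg).continuousOn
    · rw [interior_Icc]
      exact fun s hs => (hhder s hs).differentiableAt.differentiableWithinAt
    · rw [interior_Icc]
      intro s hs
      rw [(hhder s hs).deriv]
      have h1 := hb s hs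
      have h2 := Real.exp_pos (-ψ s)
      nlinarith [mul_le_mul_of_nonneg_right h1 h2.le]
  have hT1 := hanti (Set.left_mem_Icc.mpr hT.le) (Set.right_mem_Icc.mpr hT.le) hT.le
  simp only [hφ0, zero_mul] at hT1
  have h2 : 0 ≤ φ T * Real.exp (-ψ T) :=
    mul_nonneg (hφpos T (Set.right_mem_Icc.mpr hT.le)) (Real.exp_pos _).le
  have h3 : φ T * Real.exp (-ψ T) = 0 := le_antisymm hT1 h2
  exact (mul_eq_zero.mp h3).resolve_right (Real.exp_ne_zero _)

private lemma key15 {X : Type*} [NormedAddCommGroup X] [NormedSpace ℂ X] [CompleteSpace X]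
    (A : X →L[ℂ] X) (β : ℂ) (hβ1 : -1 < β.re) (hβ2 : β.re < 1)
    (w w' w'' : ℝ → X)
    (hw_cont : ContinuousOn w (Set.Ici 0))
    (hw' : ∀ t ∈ Set.Ioi (0:ℝ), HasDerivAt w (w' t) t)
    (hw'' : ∀ t ∈ Set.Ioi (0:ℝ), HasDerivAt w' (w'' t) t)
    (hODE : ∀ t ∈ Set.Ioi (0:ℝ), w'' t + (β / (t:ℂ)) • w' t = A (w t))
    (hw0 : w 0 = 0)
    (hy : Filter.Tendsto (fun t : ℝ => ((t:ℂ) ^ β) • w' t)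
      (nhdsWithin 0 (Set.Ioi 0)) (nhds 0)) :
    ∀ t ∈ Set.Ici (0:ℝ), w t = 0 := by
  set a : ℝ := β.re with ha_def
  set F : ℝ → X := fun s => ((s:ℂ) ^ β) • A (w s) with hF_def
  set V : ℝ → X := fun t => ((t:ℂ) ^ β) • w' t with hV_def
  set g : ℝ → ℝ := fun s => s ^ a * ‖w s‖ with hg_def
  set φ : ℝ → ℝ := fun r => ∫ s in (0:ℝ)..r, g s with hφ_def
  -- derivative of the complex power
  have hcpow : ∀ t ∈ Set.Ioi (0:ℝ),
      HasDerivAt (fun s : ℝ => (s:ℂ) ^ β) (β * (t:ℂ) ^ (β - 1)) t := by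
    intro t ht
    have h := (HasDerivAt.cpow_const (c := β) (hasDerivAt_id (t:ℂ))
      (Or.inl (by exact_mod_cast ht))).comp_ofReal
    simpa using h
  -- continuity of w, w' on Ioi 0
  have hw_contIoi : ContinuousOn w (Set.Ioi 0) := fun t ht =>
    ((hw' t ht).continuousAt).continuousWithinAt
  have hw'_contIoi : ContinuousOn w' (Set.Ioi 0) := fun t ht =>
    ((hw'' t ht).continuousAt).continuousWithinAt
  -- V has derivative F
  have hV : ∀ t ∈ Set.Ioi (0:ℝ), HasDerivAt V (F t) t := by
    intro t ht
    have htR : (0:ℝ) < t := ht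
    have htC : (t:ℂ) ≠ 0 := by exact_mod_cast htR.ne'
    have h := (hcpow t ht).smul (hw'' t ht)
    have hODEt := hODE t ht
    have hw''t : w'' t = A (w t) - (β / (t:ℂ)) • w' t := by
      rw [← hODEt]; abel
    have : (t:ℂ) ^ β • w'' t + (β * (t:ℂ) ^ (β - 1)) • w' t = F t := by
      have h1 : β * (t:ℂ) ^ (β - 1) = ((t:ℂ) ^ β) * (β / (t:ℂ)) := by
        rw [Complex.cpow_sub _ _ htC, Complex.cpow_one]
        field_simp
      rw [hw''t, hF_def, h1]
      module
    rw [this] at h; exact h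
  -- pointwise norm bounds
  have hnormcpow : ∀ s : ℝ, 0 < s → ‖(s:ℂ) ^ β‖ = s ^ a := by
    intro s hs
    rw [Complex.norm_cpow_eq_rpow_re_of_pos hs]
  have hnormF : ∀ s : ℝ, 0 < s → ‖F s‖ ≤ ‖A‖ * g s := by
    intro s hs
    rw [hF_def]
    simp only [norm_smul, hnormcpow s hs, hg_def]
    calc s ^ a * ‖A (w s)‖ ≤ s ^ a * (‖A‖ * ‖w s‖) := by
          apply mul_le_mul_of_nonneg_left (A.le_opNorm _) (Real.rpow_nonneg hs.le _)
      _ = ‖A‖ * (s ^ a * ‖w s‖) := by ring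
  -- interval integrability of F and g
  have hbound : ∀ T : ℝ, 0 < T → ∃ M : ℝ, 0 ≤ M ∧ ∀ s ∈ Set.Icc (0:ℝ) T, ‖w s‖ ≤ M := by
    intro T hT
    obtain ⟨C, hC⟩ := (isCompact_Icc (a := (0:ℝ)) (b := T)).exists_bound_of_continuousOn
      (hw_cont.mono (fun s hs => hs.1))
    exact ⟨max C 0, le_max_right _ _, fun s hs => (hC s hs).trans (le_max_left _ _)⟩
  have hrpow_int : ∀ (r : ℝ), -1 < r → ∀ T : ℝ, IntervalIntegrable (fun s : ℝ => s ^ r)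
      volume 0 T := fun r hr T => intervalIntegral.intervalIntegrable_rpow' hr
  have hgi : ∀ T : ℝ, 0 < T → IntervalIntegrable g volume 0 T := by
    intro T hT
    obtain ⟨M, hM0, hM⟩ := hbound T hT
    rw [intervalIntegrable_iff_integrableOn_Ioc_of_le hT.le]
    apply Integrable.mono' (g := fun s => M * s ^ a)
    · have := (hrpow_int a hβ1 T).const_mul M
      exact (intervalIntegrable_iff_integrableOn_Ioc_of_le hT.le).mp this
    · apply ContinuousOn.aestronglyMeasurable _ measurableSet_Ioc
      intro s hs
      exact ((Real.continuousAt_rpow_const s a (Or.inl hs.1.ne')).continuousWithinAt.mul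
        ((hw_contIoi s hs.1).norm.mono Set.Ioc_subset_Ioi_self))
    · filter_upwards [ae_restrict_mem measurableSet_Ioc] with s hs
      have h1 : |g s| = s ^ a * ‖w s‖ :=
        _root_.abs_of_nonneg (mul_nonneg (Real.rpow_nonneg hs.1.le _) (norm_nonneg _))
      rw [Real.norm_eq_abs, h1, mul_comm M]
      exact mul_le_mul_of_nonneg_left (hM s ⟨hs.1.le, hs.2⟩) (Real.rpow_nonneg hs.1.le _)
  have hFi : ∀ T : ℝ, 0 < T → IntervalIntegrable F volume 0 T := by
    intro T hT
    obtain ⟨M, hM0, hM⟩ := hbound T hT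
    rw [intervalIntegrable_iff_integrableOn_Ioc_of_le hT.le]
    apply Integrable.mono' (g := fun s => (‖A‖ * M) * s ^ a)
    · have := (hrpow_int a hβ1 T).const_mul (‖A‖ * M)
      exact (intervalIntegrable_iff_integrableOn_Ioc_of_le hT.le).mp this
    · apply ContinuousOn.aestronglyMeasurable _ measurableSet_Ioc
      intro s hs
      apply ContinuousWithinAt.smul
      · exact ((hcpow s hs.1).continuousAt).continuousWithinAt
      · exact (A.continuous.comp_continuousOn
          (hw_contIoi.mono Set.Ioc_subset_Ioi_self)) s hs
    · filter_upwards [ae_restrict_mem measurableSet_Ioc] with s hs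
      calc ‖F s‖ ≤ ‖A‖ * g s := hnormF s hs.1
        _ = ‖A‖ * (s ^ a * ‖w s‖) := rfl
        _ ≤ ‖A‖ * (s ^ a * M) := by
            apply mul_le_mul_of_nonneg_left _ (norm_nonneg _)
            exact mul_le_mul_of_nonneg_left (hM s ⟨hs.1.le, hs.2⟩) (Real.rpow_nonneg hs.1.le _)
        _ = (‖A‖ * M) * s ^ a := by ring
  -- key identity : V t = ∫ 0..t F
  have hVint : ∀ t ∈ Set.Ioi (0:ℝ), V t = ∫ s in (0:ℝ)..t, F s := by
    intro t ht
    have hFit := hFi t ht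
    have hIcc : IntegrableOn F (Set.Icc (0:ℝ) t) volume := by
      rw [integrableOn_Icc_iff_integrableOn_Ioc]
      exact (intervalIntegrable_iff_integrableOn_Ioc_of_le (le_of_lt ht)).mp hFit
    have hprim : ContinuousOn (fun r => ∫ s in r..t, F s) (Set.uIcc 0 t) :=
      intervalIntegral.continuousOn_primitive_interval_left (by rwa [Set.uIcc_of_le ht.le])
    have lim1 : Filter.Tendsto (fun ε => ∫ s in ε..t, F s)
        (nhdsWithin 0 (Set.Ioi 0)) (nhds (∫ s in (0:ℝ)..t, F s)) := by
      have h0 : (0:ℝ) ∈ Set.uIcc 0 t := Set.left_mem_uIcc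
      have := (hprim 0 h0).tendsto
      rw [← nhdsWithin_Ioc_eq_nhdsGT ht]
      refine this.mono_left (nhdsWithin_mono _ ?_)
      rw [Set.uIcc_of_le ht.le]
      exact Set.Ioc_subset_Icc_self
    have lim2 : Filter.Tendsto (fun ε => V t - V ε)
        (nhdsWithin 0 (Set.Ioi 0)) (nhds (V t)) := by
      simpa using (tendsto_const_nhds (x := V t)).sub hy
    have heq : ∀ᶠ ε in nhdsWithin 0 (Set.Ioi 0), (∫ s in ε..t, F s) = V t - V ε := by
      filter_upwards [Ioo_mem_nhdsGT_of_mem (Set.mem_Ico.mpr ⟨le_refl 0, ht⟩)] with ε hε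
      apply intervalIntegral.integral_eq_sub_of_hasDerivAt
      · intro x hx
        rw [Set.uIcc_of_le hε.2.le] at hx
        exact hV x (lt_of_lt_of_le hε.1 hx.1)
      · apply hFit.mono_set
        rw [Set.uIcc_of_le hε.2.le, Set.uIcc_of_le ht.le]
        exact Set.Icc_subset_Icc hε.1.le le_rfl
    exact tendsto_nhds_unique lim2 (Tendsto.congr' heq lim1)
  -- φ basic properties
  have φ0 : φ 0 = 0 := intervalIntegral.integral_same
  have gnonneg : ∀ s : ℝ, 0 ≤ s → 0 ≤ g s := fun s h =>
    mul_nonneg (Real.rpow_nonneg h _) (norm_nonneg _)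
  have φnonneg : ∀ t : ℝ, 0 ≤ t → 0 ≤ φ t := by
    intro t ht
    exact intervalIntegral.integral_nonneg ht (fun s hs => gnonneg s hs.1)
  have φmono : ∀ s t : ℝ, 0 ≤ s → s ≤ t → φ s ≤ φ t := by
    intro s t hs hst
    rcases eq_or_lt_of_le (hs.trans hst) with h | ht0
    · have : s = 0 := le_antisymm (hst.trans h.symm.le) hs
      rw [this, ← h]
    have h1 : IntervalIntegrable g volume 0 s := by
      apply (hgi t ht0).mono_set
      rw [Set.uIcc_of_le hs, Set.uIcc_of_le (hs.trans hst)]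
      exact Set.Icc_subset_Icc le_rfl hst
    have h2 : IntervalIntegrable g volume s t := by
      apply (hgi t ht0).mono_set
      rw [Set.uIcc_of_le hst, Set.uIcc_of_le (hs.trans hst)]
      exact Set.Icc_subset_Icc hs le_rfl
    have hadd : φ s + ∫ x in s..t, g x = φ t :=
      intervalIntegral.integral_add_adjacent_intervals h1 h2
    have : 0 ≤ ∫ x in s..t, g x :=
      intervalIntegral.integral_nonneg hst (fun x hx => gnonneg x (hs.trans hx.1))
    linarith
  -- bound for w'
  have hw'bound : ∀ t ∈ Set.Ioi (0:ℝ), t ^ a * ‖w' t‖ ≤ ‖A‖ * φ t := by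
    intro t ht
    have h1 : t ^ a * ‖w' t‖ = ‖V t‖ := by
      rw [hV_def]; simp only [norm_smul, hnormcpow t ht]
    rw [h1, hVint t ht, intervalIntegral.integral_of_le ht.le]
    calc ‖∫ s in Set.Ioc 0 t, F s‖ ≤ ∫ s in Set.Ioc 0 t, ‖F s‖ :=
          norm_integral_le_integral_norm F
      _ ≤ ∫ s in Set.Ioc 0 t, ‖A‖ * g s := by
          apply setIntegral_mono_on
          · exact ((intervalIntegrable_iff_integrableOn_Ioc_of_le ht.le).mp (hFi t ht)).norm
          · exact ((intervalIntegrable_iff_integrableOn_Ioc_of_le ht.le).mp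
              ((hgi t ht).const_mul ‖A‖))
          · exact measurableSet_Ioc
          · exact fun s hs => hnormF s hs.1
      _ = ‖A‖ * ∫ s in Set.Ioc 0 t, g s := by rw [MeasureTheory.integral_const_mul]
      _ = ‖A‖ * φ t := by
          simp only [hφ_def, intervalIntegral.integral_of_le ht.le]
  have hw'bound' : ∀ t ∈ Set.Ioi (0:ℝ), ‖w' t‖ ≤ (‖A‖ * φ t) * t ^ (-a) := by
    intro t ht
    have hta : (0:ℝ) < t ^ a := Real.rpow_pos_of_pos ht _
    have h2 := hw'bound t ht
    calc ‖w' t‖ = (t ^ a)⁻¹ * (t ^ a * ‖w' t‖) := by field_simp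
      _ ≤ (t ^ a)⁻¹ * (‖A‖ * φ t) := by
          exact mul_le_mul_of_nonneg_left h2 (inv_nonneg.mpr hta.le)
      _ = (‖A‖ * φ t) * t ^ (-a) := by rw [Real.rpow_neg ht.le]; ring
  -- interval integrability of w'
  have hw'int : ∀ t ∈ Set.Ioi (0:ℝ), IntervalIntegrable w' volume 0 t := by
    intro t ht
    rw [intervalIntegrable_iff_integrableOn_Ioc_of_le ht.le]
    apply Integrable.mono' (g := fun s => (‖A‖ * φ t) * s ^ (-a))
    · exact (intervalIntegrable_iff_integrableOn_Ioc_of_le ht.le).mp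
        ((hrpow_int (-a) (by linarith) t).const_mul _)
    · exact (hw'_contIoi.mono Set.Ioc_subset_Ioi_self).aestronglyMeasurable measurableSet_Ioc
    · filter_upwards [ae_restrict_mem measurableSet_Ioc] with s hs
      calc ‖w' s‖ ≤ (‖A‖ * φ s) * s ^ (-a) := hw'bound' s hs.1
        _ ≤ (‖A‖ * φ t) * s ^ (-a) := by
            apply mul_le_mul_of_nonneg_right _ (Real.rpow_nonneg hs.1.le _)
            exact mul_le_mul_of_nonneg_left (φmono s t hs.1.le hs.2) (norm_nonneg _)
  -- representation of w as integral of w'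
  have hwint : ∀ t ∈ Set.Ioi (0:ℝ), w t = ∫ s in (0:ℝ)..t, w' s := by
    intro t ht
    have hw'it := hw'int t ht
    have hIcc : IntegrableOn w' (Set.Icc (0:ℝ) t) volume := by
      rw [integrableOn_Icc_iff_integrableOn_Ioc]
      exact (intervalIntegrable_iff_integrableOn_Ioc_of_le ht.le).mp hw'it
    have hprim : ContinuousOn (fun r => ∫ s in r..t, w' s) (Set.uIcc 0 t) :=
      intervalIntegral.continuousOn_primitive_interval_left (by rwa [Set.uIcc_of_le ht.le])
    have lim1 : Filter.Tendsto (fun ε => ∫ s in ε..t, w' s)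
        (nhdsWithin 0 (Set.Ioi 0)) (nhds (∫ s in (0:ℝ)..t, w' s)) := by
      have h0 : (0:ℝ) ∈ Set.uIcc 0 t := Set.left_mem_uIcc
      have := (hprim 0 h0).tendsto
      rw [← nhdsWithin_Ioc_eq_nhdsGT ht]
      refine this.mono_left (nhdsWithin_mono _ ?_)
      rw [Set.uIcc_of_le ht.le]
      exact Set.Ioc_subset_Icc_self
    have limw : Filter.Tendsto (fun ε => w t - w ε)
        (nhdsWithin 0 (Set.Ioi 0)) (nhds (w t)) := by
      have hw0' : Filter.Tendsto w (nhdsWithin 0 (Set.Ioi 0)) (nhds 0) := by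
        have := (hw_cont 0 Set.self_mem_Ici).tendsto
        rw [hw0] at this
        exact this.mono_left (nhdsWithin_mono _ (fun s hs => Set.mem_Ici.mpr (le_of_lt (Set.mem_Ioi.mp hs))))
      simpa using (tendsto_const_nhds (x := w t)).sub hw0'
    have heq : ∀ᶠ ε in nhdsWithin 0 (Set.Ioi 0), (∫ s in ε..t, w' s) = w t - w ε := by
      filter_upwards [Ioo_mem_nhdsGT_of_mem (Set.mem_Ico.mpr ⟨le_refl 0, ht⟩)] with ε hε
      apply intervalIntegral.integral_eq_sub_of_hasDerivAt
      · intro z hz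
        rw [Set.uIcc_of_le hε.2.le] at hz
        exact hw' z (lt_of_lt_of_le hε.1 hz.1)
      · apply hw'it.mono_set
        rw [Set.uIcc_of_le hε.2.le, Set.uIcc_of_le ht.le]
        exact Set.Icc_subset_Icc hε.1.le le_rfl
    exact tendsto_nhds_unique limw (Filter.Tendsto.congr' heq lim1)
  -- main Gronwall-type bound for w
  have hwb2 : ∀ T : ℝ, 0 < T → ∀ t ∈ Set.Ioc (0:ℝ) T,
      ‖w t‖ ≤ (‖A‖ * T ^ (1 - a) / (1 - a)) * φ t := by
    intro T hT t ht
    have ht0 : (0:ℝ) < t := ht.1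
    have h1a : (0:ℝ) < 1 - a := by linarith
    rw [hwint t ht0, intervalIntegral.integral_of_le ht0.le]
    calc ‖∫ s in Set.Ioc 0 t, w' s‖ ≤ ∫ s in Set.Ioc 0 t, ‖w' s‖ :=
        norm_integral_le_integral_norm w'
      _ ≤ ∫ s in Set.Ioc 0 t, (‖A‖ * φ t) * s ^ (-a) := by
          apply setIntegral_mono_on
          · exact ((intervalIntegrable_iff_integrableOn_Ioc_of_le ht0.le).mp
              (hw'int t ht0)).norm
          · exact (intervalIntegrable_iff_integrableOn_Ioc_of_le ht0.le).mp
              ((hrpow_int (-a) (by linarith) t).const_mul _)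
          · exact measurableSet_Ioc
          · intro s hs
            calc ‖w' s‖ ≤ (‖A‖ * φ s) * s ^ (-a) := hw'bound' s hs.1
              _ ≤ (‖A‖ * φ t) * s ^ (-a) := by
                  apply mul_le_mul_of_nonneg_right _ (Real.rpow_nonneg hs.1.le _)
                  exact mul_le_mul_of_nonneg_left (φmono s t hs.1.le hs.2) (norm_nonneg _)
      _ = (‖A‖ * φ t) * ∫ s in Set.Ioc 0 t, s ^ (-a) := MeasureTheory.integral_const_mul _ _
      _ = (‖A‖ * φ t) * (t ^ (1 - a) / (1 - a)) := by
          rw [← intervalIntegral.integral_of_le ht0.le,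
            integral_rpow (Or.inl (by linarith : (-1:ℝ) < -a)),
            Real.zero_rpow (by linarith : -a + 1 ≠ 0)]
          have hex : -a + 1 = 1 - a := by ring
          rw [hex, sub_zero]
      _ ≤ (‖A‖ * T ^ (1 - a) / (1 - a)) * φ t := by
          have hrr : t ^ (1 - a) ≤ T ^ (1 - a) :=
            Real.rpow_le_rpow ht0.le ht.2 h1a.le
          have hkey := mul_le_mul_of_nonneg_left hrr
            (mul_nonneg (norm_nonneg A) (φnonneg t ht0.le))
          calc (‖A‖ * φ t) * (t ^ (1 - a) / (1 - a))
              = ((‖A‖ * φ t) * t ^ (1 - a)) / (1 - a) := by ring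
            _ ≤ ((‖A‖ * φ t) * T ^ (1 - a)) / (1 - a) := by
                gcongr
            _ = (‖A‖ * T ^ (1 - a) / (1 - a)) * φ t := by ring
  -- conclusion
  intro t ht
  rcases eq_or_lt_of_le (Set.mem_Ici.mp ht) with h0 | htpos
  · rw [← h0]; exact hw0
  -- derivative of φ
  have hg_cont : ContinuousOn g (Set.Ioi 0) := by
    intro s hs
    exact ((Real.continuousAt_rpow_const s a (Or.inl (ne_of_gt hs))).continuousWithinAt.mul
      (hw_contIoi s hs).norm)
  have hφderiv : ∀ s ∈ Set.Ioi (0:ℝ), HasDerivAt φ (g s) s := by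
    intro s hs
    apply intervalIntegral.integral_hasDerivAt_right (hgi s hs)
      (ContinuousOn.stronglyMeasurableAtFilter isOpen_Ioi hg_cont s hs)
    exact (Real.continuousAt_rpow_const s a (Or.inl (ne_of_gt hs))).mul
      ((hw' s hs).continuousAt.norm)
  have hφcont : ContinuousOn φ (Set.Icc 0 t) := by
    have := intervalIntegral.continuousOn_primitive_interval' (hgi t htpos)
      (Set.left_mem_uIcc (a := (0:ℝ)) (b := t))
    rwa [Set.uIcc_of_le htpos.le] at this
  set C : ℝ := ‖A‖ * t ^ (1 - a) / (1 - a) with hC_def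
  have ha1 : (0:ℝ) < a + 1 := by linarith
  have hψd : ∀ s ∈ Set.Ioo (0:ℝ) t, HasDerivAt (fun r : ℝ => C * (r ^ (a + 1) / (a + 1)))
      (C * s ^ a) s := by
    intro s hs
    have heq : C * s ^ a = C * ((a + 1) * s ^ (a + 1 - 1) / (a + 1)) := by
      rw [add_sub_cancel_right]
      field_simp
    rw [heq]
    exact ((Real.hasDerivAt_rpow_const (Or.inl (ne_of_gt hs.1))).div_const (a + 1)).const_mul C
  have hψc : Continuous (fun r : ℝ => C * (r ^ (a + 1) / (a + 1))) := by
    apply Continuous.mul continuous_const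
    exact (Real.continuous_rpow_const ha1.le).div_const _
  have hφT : φ t = 0 := by
    apply gronwall15 φ (fun r : ℝ => C * (r ^ (a + 1) / (a + 1))) g
      (fun s : ℝ => C * s ^ a) t htpos hφcont φ0
      (fun s hs => φnonneg s hs.1)
      (fun s hs => hφderiv s hs.1) hψc hψd
    intro s hs
    have hws := hwb2 t htpos s ⟨hs.1, hs.2.le⟩
    have hsa : (0:ℝ) ≤ s ^ a := Real.rpow_nonneg hs.1.le a
    have := mul_le_mul_of_nonneg_left hws hsa
    calc g s = s ^ a * ‖w s‖ := rfl
      _ ≤ s ^ a * ((‖A‖ * t ^ (1 - a) / (1 - a)) * φ s) := this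
      _ = (C * s ^ a) * φ s := by rw [hC_def]; ring
  have hfin := hwb2 t htpos t ⟨htpos, le_rfl⟩
  rw [hφT, mul_zero] at hfin
  exact norm_le_zero_iff.mp hfin

theorem stmt15 {X : Type*} [NormedAddCommGroup X] [NormedSpace ℂ X] [CompleteSpace X]
    (A : X →L[ℂ] X) (α : ℂ) (hα1 : 0 < α.re) (hα2 : α.re < 1)
    (x y : X) (u₁ u₁' u₁'' u₂ u₂' u₂'' : ℝ → X)
    (h₁_cont : ContinuousOn u₁ (Set.Ici 0))
    (h₁' : ∀ t ∈ Set.Ioi (0 : ℝ), HasDerivAt u₁ (u₁' t) t)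
    (h₁'' : ∀ t ∈ Set.Ioi (0 : ℝ), HasDerivAt u₁' (u₁'' t) t)
    (h₁''_cont : ContinuousOn u₁'' (Set.Ioi 0))
    (h₁ODE : ∀ t ∈ Set.Ioi (0 : ℝ), u₁'' t + ((1 - 2 * α) / (t : ℂ)) • u₁' t = A (u₁ t))
    (h₁x : u₁ 0 = x)
    (h₁y : Filter.Tendsto (fun t : ℝ => ((t : ℂ) ^ (1 - 2 * α)) • u₁' t)
      (nhdsWithin 0 (Set.Ioi 0)) (nhds y))
    (h₂_cont : ContinuousOn u₂ (Set.Ici 0))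
    (h₂' : ∀ t ∈ Set.Ioi (0 : ℝ), HasDerivAt u₂ (u₂' t) t)
    (h₂'' : ∀ t ∈ Set.Ioi (0 : ℝ), HasDerivAt u₂' (u₂'' t) t)
    (h₂''_cont : ContinuousOn u₂'' (Set.Ioi 0))
    (h₂ODE : ∀ t ∈ Set.Ioi (0 : ℝ), u₂'' t + ((1 - 2 * α) / (t : ℂ)) • u₂' t = A (u₂ t))
    (h₂x : u₂ 0 = x)
    (h₂y : Filter.Tendsto (fun t : ℝ => ((t : ℂ) ^ (1 - 2 * α)) • u₂' t)
      (nhdsWithin 0 (Set.Ioi 0)) (nhds y)) :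
    Set.EqOn u₁ u₂ (Set.Ici 0) := by
  have hre : (1 - 2 * α).re = 1 - 2 * α.re := by simp
  have hβ1 : -1 < (1 - 2 * α).re := by rw [hre]; linarith
  have hβ2 : (1 - 2 * α).re < 1 := by rw [hre]; linarith
  have key := key15 A (1 - 2 * α) hβ1 hβ2
    (fun t => u₁ t - u₂ t) (fun t => u₁' t - u₂' t) (fun t => u₁'' t - u₂'' t)
    (h₁_cont.sub h₂_cont)
    (fun t ht => (h₁' t ht).sub (h₂' t ht))
    (fun t ht => (h₁'' t ht).sub (h₂'' t ht))
    (by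
      intro t ht
      have e₁ := h₁ODE t ht
      have e₂ := h₂ODE t ht
      rw [map_sub, ← e₁, ← e₂, smul_sub]
      abel)
    (by show u₁ 0 - u₂ 0 = 0; rw [h₁x, h₂x, sub_self])
    (by
      have := h₁y.sub h₂y
      simp only [sub_self] at this
      refine this.congr (fun t => ?_)
      rw [smul_sub])
  intro t ht
  have := key t ht
  exact sub_eq_zero.mp this
end

section
/- Let ω ∈ [0, π) and s ≥ 0. Set c := cos(ω/2) if ω ≤ π/2 and c := (sin ω)^{1/2} cos(ω/2) if ω > π/2, and set κ := c/2 and φ := arctan(2 tan(ω/2)). Then for every λ ∈ s + S_ω (with the convention s + S_0 = (s,∞)) one has: √λ ∈ S_{ω/2}, Re(√λ) ≥ c √s, and √λ ∈ κ√s + S_φ, where √ denotes the principal branch of the square root. -/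
open Complex Filter Set MeasureTheory

private lemma exp_half_log {A : ℝ} (hA : 0 < A) :
    Real.exp (Real.log A / 2) = Real.sqrt A := by
  rw [Real.sqrt_eq_rpow, Real.rpow_def_of_pos hA]
  ring_nf

private lemma sqrt_repr {lam : ℂ} (h : lam ≠ 0) :
    lam ^ ((1 : ℂ)/2) = (Real.sqrt (‖lam‖) : ℂ) *
      ((Real.cos (lam.arg / 2) : ℂ) + (Real.sin (lam.arg / 2) : ℂ) * Complex.I) := by
  rw [Complex.cpow_def_of_ne_zero h, Complex.exp_eq_exp_re_mul_sin_add_cos]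
  have h1 : (Complex.log lam * ((1 : ℂ)/2)).re = Real.log (‖lam‖) / 2 := by
    simp [Complex.mul_re, Complex.log_re, Complex.log_im]
    ring
  have h2 : (Complex.log lam * ((1 : ℂ)/2)).im = lam.arg / 2 := by
    simp [Complex.mul_im, Complex.log_re, Complex.log_im]
    ring
  rw [h1, h2, ← Complex.ofReal_exp, exp_half_log (norm_pos_iff.mpr h),
    ← Complex.ofReal_cos, ← Complex.ofReal_sin]

private lemma abs_sin_eq {θ : ℝ} (h : |θ| ≤ Real.pi) : |Real.sin θ| = Real.sin |θ| := by
  rcases abs_cases θ with ⟨h1, h2⟩ | ⟨h1, h2⟩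
  · rw [h1, _root_.abs_of_nonneg (Real.sin_nonneg_of_nonneg_of_le_pi h2 (by rw [← h1]; exact h))]
  · have hnn : 0 ≤ Real.sin (-θ) :=
      Real.sin_nonneg_of_nonneg_of_le_pi (by linarith) (by rw [← h1]; exact h)
    rw [Real.sin_neg] at hnn
    rw [h1, Real.sin_neg, _root_.abs_of_nonpos (by linarith)]

private lemma le_of_sq_le_sq' {a b : ℝ} (ha : 0 ≤ a) (h : b ^ 2 ≤ a ^ 2) : b ≤ a := by
  nlinarith [abs_nonneg b, _root_.sq_abs b, le_abs_self b]

private lemma arith_key {s x y a A : ℝ} (hs : 0 ≤ s) (ha : 0 < a) (hA : 0 < A)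
    (ha2 : a ^ 2 = x ^ 2 + y ^ 2) (hA2 : A ^ 2 = (s + x) ^ 2 + y ^ 2) :
    x * A ≤ (s + x) * a := by
  rcases le_or_gt 0 x with hx0 | hx0
  · refine le_of_sq_le_sq' (by positivity) ?_
    nlinarith [mul_nonneg (mul_nonneg hs hx0) (sq_nonneg y),
      mul_nonneg (sq_nonneg s) (sq_nonneg y)]
  · rcases le_or_gt 0 (s + x) with hsx | hsx
    · have h1 : x * A ≤ 0 := mul_nonpos_of_nonpos_of_nonneg hx0.le hA.le
      have h2 : 0 ≤ (s + x) * a := mul_nonneg hsx ha.le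
      linarith
    · have h2 : -((s + x) * a) ≤ -(x * A) := by
        refine le_of_sq_le_sq' (by nlinarith) ?_
        nlinarith [mul_nonneg (mul_nonneg hs (by linarith : (0:ℝ) ≤ -(2*x+s))) (sq_nonneg y)]
      linarith

private lemma arith_A {s x y a A : ℝ} (hs : 0 ≤ s) (ha : 0 < a) (hA : 0 < A)
    (ha2 : a ^ 2 = x ^ 2 + y ^ 2) (hA2 : A ^ 2 = (s + x) ^ 2 + y ^ 2) :
    2 * s * y ^ 2 ≤ (A + (s + x)) * a ^ 2 := by
  have hid : (A * a ^ 2) ^ 2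
      = (2*s*y^2 - (s+x)*a^2) ^ 2 + (y*(a^2 + 2*s*x)) ^ 2 := by
    have e : (A * a ^ 2) ^ 2 = A ^ 2 * (a ^ 2) ^ 2 := by ring
    rw [e, hA2, ha2]; ring
  have h3 : 2*s*y^2 - (s+x)*a^2 ≤ A * a^2 := by
    refine le_of_sq_le_sq' (by positivity) ?_
    nlinarith [sq_nonneg (y*(a^2 + 2*s*x))]
  nlinarith [h3]

private lemma arith_1 {s x A c : ℝ} (hs : 0 ≤ s) (hx0 : 0 ≤ x) (h1 : s + x ≤ A)
    (hc0 : 0 ≤ c) (hc1 : c ≤ 1) : 2 * c ^ 2 * s ≤ A + (s + x) := by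
  nlinarith [mul_nonneg (mul_nonneg hs (by linarith : (0:ℝ) ≤ 1 - c))
    (by linarith : (0:ℝ) ≤ 1 + c)]

private lemma arith_y {a w y : ℝ} (h0 : 0 ≤ a * w) (h : a * w ≤ |y|) :
    a ^ 2 * w ^ 2 ≤ y ^ 2 := by
  nlinarith [_root_.sq_abs y, abs_nonneg y]

private lemma arith_tan {T m k : ℝ} (hT : 0 < T) (hk : k ≤ m / 2) :
    m * T ≤ 2 * T * (m - k) := by nlinarith

set_option maxHeartbeats 1000000 in
theorem stmt16 (ω : ℝ) (hω : ω ∈ Set.Ico 0 Real.pi) (s : ℝ) (hs : 0 ≤ s)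
    (c κ φ : ℝ)
    (hc : c = if ω ≤ Real.pi / 2 then Real.cos (ω / 2)
              else Real.sqrt (Real.sin ω) * Real.cos (ω / 2))
    (hκ : κ = c / 2) (hφ : φ = Real.arctan (2 * Real.tan (ω / 2))) :
    ∀ lam : ℂ, (∃ ζ ∈ sector ω, lam = (s : ℂ) + ζ) →
      lam ^ ((1 : ℂ) / 2) ∈ sector (ω / 2) ∧
      c * Real.sqrt s ≤ (lam ^ ((1 : ℂ) / 2)).re ∧
      ∃ ζ ∈ sector φ, lam ^ ((1 : ℂ) / 2) = ((κ * Real.sqrt s : ℝ) : ℂ) + ζ := by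
  obtain ⟨hω0, hωπ⟩ := hω
  have hπ := Real.pi_pos
  rintro lam ⟨ζ, hζ, rfl⟩
  rcases eq_or_lt_of_le hω0 with h0 | h0
  · -- case ω = 0
    rw [sector, if_pos h0.symm] at hζ
    obtain ⟨hre, him⟩ := hζ
    have hζeq : ζ = ((ζ.re : ℝ) : ℂ) := by
      apply Complex.ext <;> simp [him]
    have hlam : (s : ℂ) + ζ = (((s + ζ.re : ℝ)) : ℂ) := by
      apply Complex.ext <;> simp [him]
    have hsx : 0 < s + ζ.re := by linarith
    have hpow : ((s : ℂ) + ζ) ^ ((1 : ℂ)/2) = (((s + ζ.re) ^ ((1:ℝ)/2) : ℝ) : ℂ) := by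
      rw [hlam, Complex.ofReal_cpow hsx.le]
      norm_num
    have hc1 : c = 1 := by
      rw [hc, if_pos (by rw [← h0]; positivity), ← h0]
      simp
    have hφ0 : φ = 0 := by
      rw [hφ, ← h0]; simp
    have hrpow_lt : Real.sqrt s < (s + ζ.re) ^ ((1:ℝ)/2) := by
      rw [Real.sqrt_eq_rpow]
      exact Real.rpow_lt_rpow hs (by linarith) (by norm_num)
    refine ⟨?_, ?_, ?_⟩
    · rw [sector, if_pos (by rw [← h0]; norm_num), hpow]
      constructor
      · simp only [Complex.ofReal_re]
        positivity
      · simp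
    · rw [hpow, hc1, one_mul]
      simp only [Complex.ofReal_re]
      exact hrpow_lt.le
    · refine ⟨((s : ℂ) + ζ) ^ ((1 : ℂ)/2) - ((κ * Real.sqrt s : ℝ) : ℂ), ?_, by ring⟩
      rw [sector, if_pos hφ0, hpow]
      constructor
      · simp only [Complex.sub_re, Complex.ofReal_re]
        have : κ * Real.sqrt s ≤ Real.sqrt s := by
          rw [hκ, hc1]
          nlinarith [Real.sqrt_nonneg s]
        linarith
      · simp
  · -- case ω > 0
    rw [sector, if_neg h0.ne'] at hζ
    obtain ⟨hζ0, hζarg⟩ := hζ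
    set x := ζ.re with hx
    set y := ζ.im with hy
    have ha : 0 < ‖ζ‖ := norm_pos_iff.mpr hζ0
    set a := ‖ζ‖ with haa
    clear_value x y a
    have ha2 : a ^ 2 = x ^ 2 + y ^ 2 := by
      rw [haa, hx, hy, Complex.sq_norm, Complex.normSq_apply]; ring
    have hlam0 : (s : ℂ) + ζ ≠ 0 := by
      intro h
      have hζs : ζ = ((-s : ℝ) : ℂ) := by push_cast; linear_combination h
      rcases lt_or_eq_of_le hs with hs' | hs'
      · have harg : ζ.arg = Real.pi := by
          rw [hζs]; exact Complex.arg_ofReal_of_neg (by linarith)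
        rw [harg, abs_of_pos hπ] at hζarg
        linarith
      · apply hζ0; rw [hζs, ← hs']; simp
    have hA : 0 < ‖(s:ℂ) + ζ‖ := norm_pos_iff.mpr hlam0
    set A := ‖(s:ℂ) + ζ‖ with hAA
    clear_value A
    have hlre : ((s:ℂ) + ζ).re = s + x := by simp [hx]
    have hlim : ((s:ℂ) + ζ).im = y := by simp [hy]
    have hA2 : A ^ 2 = (s + x) ^ 2 + y ^ 2 := by
      rw [hAA, Complex.sq_norm, Complex.normSq_apply, hlre, hlim]; ring
    have hkey : x * A ≤ (s + x) * a := arith_key hs ha hA ha2 hA2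
    have hcosle : Real.cos ζ.arg ≤ Real.cos (((s:ℂ)+ζ).arg) := by
      rw [Complex.cos_arg hζ0, Complex.cos_arg hlam0, hlre, ← haa, ← hAA, ← hx,
        div_le_div_iff₀ ha hA]
      exact hkey
    set t := ((s:ℂ)+ζ).arg with htdef
    clear_value t
    have habs : |t| ≤ |ζ.arg| := by
      by_contra hcon
      push_neg at hcon
      have h1 := Real.strictAntiOn_cos ⟨abs_nonneg _, Complex.abs_arg_le_pi ζ⟩
        ⟨abs_nonneg t, htdef ▸ Complex.abs_arg_le_pi ((s:ℂ)+ζ)⟩ hcon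
      rw [Real.cos_abs, Real.cos_abs] at h1
      linarith
    have ht : |t| < ω := lt_of_le_of_lt habs hζarg
    have htπ : |t| < Real.pi := ht.trans hωπ
    have htabs := abs_lt.mp htπ
    set μ := ((s:ℂ) + ζ) ^ ((1:ℂ)/2) with hμdef
    clear_value μ
    have hrepr := sqrt_repr hlam0
    rw [← hAA, ← htdef, ← hμdef] at hrepr
    have hcoshalf : 0 < Real.cos (t/2) :=
      Real.cos_pos_of_mem_Ioo ⟨by linarith [htabs.1], by linarith [htabs.2]⟩
    have hsA : 0 < Real.sqrt A := Real.sqrt_pos.mpr hA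
    have hre : μ.re = Real.sqrt A * Real.cos (t/2) := by
      rw [hrepr]
      simp only [Complex.mul_re, Complex.add_re, Complex.add_im, Complex.ofReal_re,
        Complex.ofReal_im, Complex.mul_im, Complex.I_re, Complex.I_im]
      ring
    have him : μ.im = Real.sqrt A * Real.sin (t/2) := by
      rw [hrepr]
      simp only [Complex.mul_re, Complex.add_re, Complex.add_im, Complex.ofReal_re,
        Complex.ofReal_im, Complex.mul_im, Complex.I_re, Complex.I_im]
      ring
    have hμre : 0 < μ.re := by rw [hre]; positivity
    have hμ0 : μ ≠ 0 := by
      intro h; rw [h] at hμre; simp at hμre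
    have harg : μ.arg = t / 2 := by
      rw [hrepr, Complex.ofReal_cos, Complex.ofReal_sin, Complex.arg_real_mul _ hsA]
      exact Complex.arg_cos_add_sin_mul_I ⟨by linarith [htabs.1], by linarith [htabs.2]⟩
    have hcosω2 : 0 ≤ Real.cos (ω/2) :=
      Real.cos_nonneg_of_mem_Icc ⟨by linarith, by linarith⟩
    have hc0 : 0 ≤ c := by
      rw [hc]; split
      · exact hcosω2
      · exact mul_nonneg (Real.sqrt_nonneg _) hcosω2
    have hc1 : c ≤ 1 := by
      rw [hc]; split
      · exact Real.cos_le_one _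
      · have h1 : Real.sqrt (Real.sin ω) ≤ 1 := by
          rw [show (1:ℝ) = Real.sqrt 1 by simp]
          exact Real.sqrt_le_sqrt (Real.sin_le_one ω)
        calc Real.sqrt (Real.sin ω) * Real.cos (ω/2) ≤ 1 * Real.cos (ω/2) :=
              mul_le_mul_of_nonneg_right h1 hcosω2
          _ ≤ 1 := by rw [one_mul]; exact Real.cos_le_one _
    have hkey2 : 2 * c^2 * s ≤ A + (s + x) := by
      rcases le_or_gt 0 x with hx0 | hx0
      · have h1 : s + x ≤ A := by rw [← hlre, hAA]; exact Complex.re_le_norm _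
        exact arith_1 hs hx0 h1 hc0 hc1
      · have hargbig : Real.pi / 2 < |ζ.arg| := by
          by_contra hcon
          push_neg at hcon
          have h1 : 0 ≤ Real.cos ζ.arg := by
            rw [← Real.cos_abs]
            exact Real.cos_nonneg_of_mem_Icc ⟨by linarith [abs_nonneg ζ.arg], hcon⟩
          rw [Complex.cos_arg hζ0, ← haa, ← hx] at h1
          have h2 : x / a < 0 := div_neg_of_neg_of_pos hx0 ha
          linarith
        have hω2 : Real.pi / 2 < ω := lt_of_lt_of_le hargbig hζarg.le
        have hsinω : 0 < Real.sin ω := Real.sin_pos_of_pos_of_lt_pi h0 hωπ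
        have hcsq : c ^ 2 = Real.sin ω * Real.cos (ω/2) ^ 2 := by
          rw [hc, if_neg (by linarith), mul_pow, Real.sq_sqrt hsinω.le]
        have hsin_arg : Real.sin ζ.arg = y / a := by
          rw [hy, haa]; exact Complex.sin_arg ζ
        have hsinabs : Real.sin ω ≤ Real.sin |ζ.arg| := by
          have h1 : Real.sin (Real.pi - ω) < Real.sin (Real.pi - |ζ.arg|) :=
            Real.sin_lt_sin_of_lt_of_le_pi_div_two (by linarith) (by linarith)
              (by linarith [hζarg])
          rw [Real.sin_pi_sub, Real.sin_pi_sub] at h1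
          linarith
        have hysin : a * Real.sin ω ≤ |y| := by
          have h2 : |y| = a * Real.sin |ζ.arg| := by
            rw [← abs_sin_eq (Complex.abs_arg_le_pi ζ), hsin_arg, _root_.abs_div,
              _root_.abs_of_pos ha]
            field_simp
          rw [h2]
          exact mul_le_mul_of_nonneg_left hsinabs ha.le
        have hy2 : a ^ 2 * Real.sin ω ^ 2 ≤ y ^ 2 :=
          arith_y (mul_nonneg ha.le hsinω.le) hysin
        have hAineq : 2 * s * y ^ 2 ≤ (A + (s + x)) * a ^ 2 := arith_A hs ha hA ha2 hA2
        have hsc : Real.cos (ω/2) ^ 2 ≤ Real.sin ω := by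
          have hsin2 : Real.sin ω = 2 * Real.sin (ω/2) * Real.cos (ω/2) := by
            rw [show ω = 2 * (ω/2) by ring, Real.sin_two_mul]; ring_nf
          have hcs : Real.cos (ω/2) < Real.sin (ω/2) := by
            have h4 : Real.sin (Real.pi/2 - ω/2) < Real.sin (ω/2) :=
              Real.sin_lt_sin_of_lt_of_le_pi_div_two (by linarith) (by linarith)
                (by linarith)
            rwa [Real.sin_pi_div_two_sub] at h4
          have h5 : Real.cos (ω/2) * Real.cos (ω/2) ≤ Real.sin (ω/2) * Real.cos (ω/2) :=
            mul_le_mul_of_nonneg_right hcs.le hcosω2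
          have h6 : 0 ≤ Real.sin (ω/2) * Real.cos (ω/2) :=
            mul_nonneg (le_trans hcosω2 hcs.le) hcosω2
          linarith [h5, h6, hsin2]
        have e2 : Real.sin ω * Real.cos (ω/2) ^ 2 ≤ Real.sin ω ^ 2 := by
          have h7 := mul_le_mul_of_nonneg_left hsc hsinω.le
          rw [pow_two (Real.sin ω)]
          exact h7
        have hcc : 2 * c^2 * s * a^2 ≤ (A + (s + x)) * a^2 := by
          calc 2 * c^2 * s * a^2
              = 2*s*a^2 * (Real.sin ω * Real.cos (ω/2)^2) := by rw [hcsq]; ring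
            _ ≤ 2*s*a^2 * (Real.sin ω ^ 2) :=
                mul_le_mul_of_nonneg_left e2 (by positivity)
            _ = 2*s * (a^2 * Real.sin ω ^ 2) := by ring
            _ ≤ 2*s * y^2 := mul_le_mul_of_nonneg_left hy2 (by linarith)
            _ = 2 * s * y ^ 2 := by ring
            _ ≤ (A + (s + x)) * a^2 := hAineq
        exact le_of_mul_le_mul_right hcc (by positivity)
    have hre2 : μ.re ^ 2 = (A + (s + x)) / 2 := by
      rw [hre, mul_pow, Real.sq_sqrt hA.le, Real.cos_sq]
      have hcost : Real.cos t = (s + x)/A := by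
        rw [htdef, Complex.cos_arg hlam0, hlre, ← hAA]
      rw [show 2 * (t/2) = t by ring, hcost]
      field_simp
    have hpart2 : c * Real.sqrt s ≤ μ.re := by
      refine le_of_sq_le_sq' hμre.le ?_
      rw [hre2, mul_pow, Real.sq_sqrt hs]
      linarith [hkey2]
    have hpart1 : μ ∈ sector (ω/2) := by
      rw [sector, if_neg (by intro h; linarith : ¬ ω/2 = 0)]
      refine ⟨hμ0, ?_⟩
      rw [harg, _root_.abs_div, _root_.abs_two]
      linarith
    -- part 3
    have htω2 : |t| / 2 < ω / 2 := by linarith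
    have hωhalf : ω / 2 < Real.pi / 2 := by linarith
    have htan : 0 < Real.tan (ω/2) :=
      Real.tan_pos_of_pos_of_lt_pi_div_two (by linarith) hωhalf
    have hφpos : 0 < φ := by
      rw [hφ, ← Real.arctan_zero]
      exact Real.arctan_strictMono (by positivity)
    set ν := μ - ((κ * Real.sqrt s : ℝ) : ℂ) with hνdef
    have hνre : ν.re = μ.re - κ * Real.sqrt s := by
      rw [hνdef]; simp
    have hνim : ν.im = μ.im := by
      rw [hνdef]; simp
    have hκs : κ * Real.sqrt s ≤ μ.re / 2 := by
      rw [hκ]; linarith [hpart2]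
    have hνrepos : 0 < ν.re := by rw [hνre]; linarith [hμre, hκs]
    have hν0 : ν ≠ 0 := by
      intro h; rw [h] at hνrepos; simp at hνrepos
    have htant : Real.tan (|t|/2) < Real.tan (ω/2) :=
      Real.tan_lt_tan_of_nonneg_of_lt_pi_div_two (by positivity) hωhalf htω2
    have himabs : |ν.im| = μ.re * Real.tan (|t|/2) := by
      have e1 : |t/2| = |t|/2 := by rw [_root_.abs_div, _root_.abs_two]
      have e2 : Real.cos (|t|/2) = Real.cos (t/2) := by rw [← e1, Real.cos_abs]
      have e3 : Real.sin (|t|/2) = |Real.sin (t/2)| := by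
        rw [← e1, ← abs_sin_eq (by rw [e1]; linarith [abs_nonneg t] : |t/2| ≤ Real.pi)]
      rw [hνim, him, abs_mul, _root_.abs_of_nonneg (Real.sqrt_nonneg A), hre,
        Real.tan_eq_sin_div_cos, e2, e3]
      field_simp
    have hbound : |ν.im| < 2 * Real.tan (ω/2) * ν.re := by
      rw [himabs, hνre]
      have h5 : μ.re * Real.tan (|t|/2) < μ.re * Real.tan (ω/2) :=
        mul_lt_mul_of_pos_left htant hμre
      have h6 : μ.re * Real.tan (ω/2) ≤ 2 * Real.tan (ω/2) * (μ.re - κ * Real.sqrt s) :=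
        arith_tan htan hκs
      linarith
    have hargν : ν.arg = Real.arctan (ν.im / ν.re) := by
      have h7 : |ν.arg| < Real.pi/2 :=
        Complex.abs_arg_lt_pi_div_two_iff.mpr (Or.inl hνrepos)
      have h8 := abs_lt.mp h7
      rw [← Complex.tan_arg, Real.arctan_tan h8.1 h8.2]
    have hargφ : |ν.arg| < φ := by
      rw [hargν, hφ]
      have h9 : |Real.arctan (ν.im/ν.re)| = Real.arctan |ν.im/ν.re| := by
        rcases le_or_gt 0 (ν.im/ν.re) with h | h
        · rw [_root_.abs_of_nonneg h, _root_.abs_of_nonneg]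
          rw [← Real.arctan_zero]
          exact Real.arctan_strictMono.monotone h
        · rw [_root_.abs_of_neg h, Real.arctan_neg]
          exact _root_.abs_of_nonpos
            (by rw [← Real.arctan_zero]; exact Real.arctan_strictMono.monotone h.le)
      rw [h9]
      apply Real.arctan_strictMono
      rw [_root_.abs_div, _root_.abs_of_pos hνrepos, div_lt_iff₀ hνrepos]
      calc |ν.im| < 2 * Real.tan (ω/2) * ν.re := hbound
        _ = 2 * Real.tan (ω/2) * ν.re := rfl
    refine ⟨hpart1, hpart2, ν, ?_, by rw [hνdef]; ring⟩
    rw [sector, if_neg hφpos.ne']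
    exact ⟨hν0, hargφ⟩
end
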